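/- arXiv:1609.01247 — 7 statements merged into one kernel-verified Lean document; each statement's English description precedes it below -/
import Mathlib

section
/- Let k ≥ 1 and set d = 3k+2. Then for every n ≥ d there exists a coloring of the 2-dimensional faces of the hypercube Q_n with exactly (k²+k+1)(k+2) colors that is d-polychromatic, i.e., every embedded d-dimensional subcube of Q_n contains a 2-face of every color. -/
set_option maxHeartbeats 1000000


/-- A `j`-dimensional face of the hypercube `Q_n`: a set `S` of `j` free coordinates
together with an assignment of bits to the coordinates outside `S`. -/
structure Face (n j : ℕ) where
  S : Finset (Fin n)
  hcard : S.card = j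
  f : ∀ i : Fin n, i ∉ S → Bool

/-- The face `G` lies in the face `F`: the free coordinates of `G` are among those
of `F`, and the fixed bits agree outside the free coordinates of `F`. -/
def LiesIn {n ℓ d : ℕ} (G : Face n ℓ) (F : Face n d) : Prop :=
  ∃ h : G.S ⊆ F.S, ∀ (i : Fin n) (hi : i ∉ F.S), G.f i (fun hG => hi (h hG)) = F.f i hi

/-- A coloring `χ` of the `ℓ`-faces of `Q_n` is `d`-polychromatic if every `d`-face
contains an `ℓ`-face of every color. -/
def Polychromatic {n ℓ : ℕ} (d : ℕ) {C : Type*} (χ : Face n ℓ → C) : Prop :=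
  ∀ (F : Face n d) (c : C), ∃ G : Face n ℓ, LiesIn G F ∧ χ G = c


private lemma divmod_eq (k a b x : ℕ) (ha : a ≤ k) (hx : x = a + (k+1)*b) :
    x % (k+1) = a ∧ x / (k+1) = b := by
  constructor
  · rw [hx, Nat.add_mul_mod_self_left, Nat.mod_eq_of_lt (by omega)]
  · rw [hx, Nat.add_mul_div_left _ _ (show 0 < k+1 by omega), Nat.div_eq_of_lt (by omega)]
    omega


private lemma rep_uniq (k a b c d x : ℕ) (ha : a ≤ k) (hc : c ≤ k)
    (h1 : x = a + (k+1)*b) (h2 : x = c + (k+1)*d) : a = c ∧ b = d := by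
  have e1 := divmod_eq k a b x ha h1
  have e2 := divmod_eq k c d x hc h2
  omega

private lemma cast_inj_small (k x y : ℕ) (hx : x ≤ k*(k+1)) (hy : y ≤ k*(k+1))
    (h : ((x:ℕ) : ZMod (k^2+k+1)) = ((y:ℕ) : ZMod (k^2+k+1))) : x = y := by
  have hlt : k*(k+1) < k^2+k+1 := by nlinarith
  have := congrArg ZMod.val h
  rwa [ZMod.val_natCast, ZMod.val_natCast, Nat.mod_eq_of_lt (by omega),
    Nat.mod_eq_of_lt (by omega)] at this

private lemma use_split (k τ ρ Pp Pq T s2 s3 s1 : ℕ) (h1 : Pp ≤ Pq) (h2 : Pq ≤ T)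
    (hc2 : ((s2 + (k+1)*s3 : ℕ) : ZMod (k^2+k+1))
        = (ρ : ZMod (k^2+k+1)) - ((Pq : ZMod (k^2+k+1)) - (Pp : ZMod (k^2+k+1)))
          - ((k : ZMod (k^2+k+1))+1) * ((T : ZMod (k^2+k+1)) - (Pq : ZMod (k^2+k+1))))
    (hc1 : ((s1 : ℕ) : ZMod (k+2))
        = (τ : ZMod (k+2)) - (T : ZMod (k+2)) - (s2 : ZMod (k+2)) - (s3 : ZMod (k+2))) :
    (T + (s1 + s2 + s3)) % (k+2) = τ % (k+2) ∧
      (((Pq - Pp) + s2) + (k+1) * ((T - Pq) + s3)) % (k^2+k+1) = ρ % (k^2+k+1) := by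
  constructor
  · exact (ZMod.natCast_eq_natCast_iff _ _ _).mp (by push_cast; linear_combination hc1)
  · refine (ZMod.natCast_eq_natCast_iff _ _ _).mp ?_
    push_cast [Nat.cast_sub h1, Nat.cast_sub h2] at hc2 ⊢
    linear_combination hc2

private lemma core (k τ ρ P1 P2 P3 P4 T : ℕ) (hk : 1 ≤ k)
    (h12 : P1 ≤ P2) (h23 : P2 ≤ P3) (h34 : P3 ≤ P4) (h4T : P4 ≤ T) :
    ∃ p q s1 s2 s3 Pp Pq,
      ((p = k ∧ Pp = P1) ∨ (p = k+1 ∧ Pp = P2)) ∧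
      ((q = 2*k+1 ∧ Pq = P3) ∨ (q = 2*k+2 ∧ Pq = P4)) ∧
      s1 ≤ p ∧ s2 + p + 1 ≤ q ∧ s3 + q ≤ 3*k+1 ∧
      (T + (s1 + s2 + s3)) % (k+2) = τ % (k+2) ∧
      (((Pq - Pp) + s2) + (k+1) * ((T - Pq) + s3)) % (k^2+k+1) = ρ % (k^2+k+1) := by
  haveI : NeZero (k^2+k+1) := ⟨by positivity⟩
  haveI : NeZero (k+2) := ⟨by omega⟩
  have hvle : ∀ R : ZMod (k^2+k+1), R.val ≤ k*(k+1) := by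
    intro R; have h := ZMod.val_lt R; have : k^2+k+1 = k*(k+1)+1 := by ring
    omega
  have hri : ∀ R : ZMod (k^2+k+1), ((R.val : ℕ) : ZMod (k^2+k+1)) = R :=
    fun R => ZMod.natCast_rightInverse R
  have hri2 : ∀ R : ZMod (k+2), ((R.val : ℕ) : ZMod (k+2)) = R :=
    fun R => ZMod.natCast_rightInverse R
  have hv2 : ∀ R : ZMod (k+2), R.val ≤ k+1 := by
    intro R; have := ZMod.val_lt R; omega
  have hm1 : ((k*(k+1) : ℕ) : ZMod (k^2+k+1)) = -1 := by
    have h0 : ((k^2+k+1 : ℕ) : ZMod (k^2+k+1)) = 0 := ZMod.natCast_self _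
    push_cast at h0 ⊢
    linear_combination h0
  have hm2 : ((k : ZMod (k+2)) + 2) = 0 := by
    have h0 : ((k+2 : ℕ) : ZMod (k+2)) = 0 := ZMod.natCast_self _
    push_cast at h0; linear_combination h0
  have hkm : ((k+1 : ℕ) : ZMod (k+2)) = -1 := by push_cast; linear_combination hm2
  -- canonical values for the four splits
  obtain ⟨xC, hxCle, hxC⟩ : ∃ x : ℕ, x ≤ k*(k+1) ∧ ((x : ℕ) : ZMod (k^2+k+1))
      = (ρ : ZMod (k^2+k+1)) - ((P4 : ZMod (k^2+k+1)) - (P2 : ZMod (k^2+k+1)))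
        - ((k : ZMod (k^2+k+1))+1) * ((T : ZMod (k^2+k+1)) - (P4 : ZMod (k^2+k+1))) :=
    ⟨_, hvle _, hri _⟩
  obtain ⟨xB, hxBle, hxB⟩ : ∃ x : ℕ, x ≤ k*(k+1) ∧ ((x : ℕ) : ZMod (k^2+k+1))
      = (ρ : ZMod (k^2+k+1)) - ((P3 : ZMod (k^2+k+1)) - (P2 : ZMod (k^2+k+1)))
        - ((k : ZMod (k^2+k+1))+1) * ((T : ZMod (k^2+k+1)) - (P3 : ZMod (k^2+k+1))) :=
    ⟨_, hvle _, hri _⟩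
  obtain ⟨xA, hxAle, hxA⟩ : ∃ x : ℕ, x ≤ k*(k+1) ∧ ((x : ℕ) : ZMod (k^2+k+1))
      = (ρ : ZMod (k^2+k+1)) - ((P3 : ZMod (k^2+k+1)) - (P1 : ZMod (k^2+k+1)))
        - ((k : ZMod (k^2+k+1))+1) * ((T : ZMod (k^2+k+1)) - (P3 : ZMod (k^2+k+1))) :=
    ⟨_, hvle _, hri _⟩
  obtain ⟨xD, hxDle, hxD⟩ : ∃ x : ℕ, x ≤ k*(k+1) ∧ ((x : ℕ) : ZMod (k^2+k+1))
      = (ρ : ZMod (k^2+k+1)) - ((P4 : ZMod (k^2+k+1)) - (P1 : ZMod (k^2+k+1)))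
        - ((k : ZMod (k^2+k+1))+1) * ((T : ZMod (k^2+k+1)) - (P4 : ZMod (k^2+k+1))) :=
    ⟨_, hvle _, hri _⟩
  by_cases hC : xC < k*(k+1)
  · -- split C : p = k+1, q = 2k+2
    obtain ⟨hm, hd⟩ := divmod_eq k (xC % (k+1)) (xC / (k+1)) xC
      (by have := Nat.mod_lt xC (show 0 < k+1 by omega); omega)
      (by have := Nat.mod_add_div xC (k+1); omega)
    have hs3 : xC / (k+1) < k := by
      rw [Nat.div_lt_iff_lt_mul (show 0 < k+1 by omega)]
      calc xC < k*(k+1) := hC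
        _ = k*(k+1) := rfl
    have hs2 : xC % (k+1) ≤ k := by have := Nat.mod_lt xC (show 0 < k+1 by omega); omega
    have H := use_split k τ ρ P2 P4 T (xC % (k+1)) (xC / (k+1))
      (((τ : ZMod (k+2)) - (T : ZMod (k+2)) - ((xC % (k+1) : ℕ) : ZMod (k+2)) - ((xC / (k+1) : ℕ) : ZMod (k+2))).val)
      (h23.trans h34) h4T
      (by rw [Nat.mod_add_div]; exact hxC) (hri2 _)
    exact ⟨k+1, 2*k+2, _, xC % (k+1), xC / (k+1), P2, P4, Or.inr ⟨rfl, rfl⟩, Or.inr ⟨rfl, rfl⟩,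
      hv2 _, by omega, by omega, H.1, H.2⟩
  · have hCv : xC = k*(k+1) := by omega
    by_cases hB : xB % (k+1) < k
    · -- split B : p = k+1, q = 2k+1
      have hs3 : xB / (k+1) ≤ k := by
        have h1 : xB / (k+1) ≤ (k*(k+1)) / (k+1) := Nat.div_le_div_right hxBle
        rwa [Nat.mul_div_cancel _ (show 0 < k+1 by omega)] at h1
      have H := use_split k τ ρ P2 P3 T (xB % (k+1)) (xB / (k+1))
        (((τ : ZMod (k+2)) - (T : ZMod (k+2)) - ((xB % (k+1) : ℕ) : ZMod (k+2)) - ((xB / (k+1) : ℕ) : ZMod (k+2))).val)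
        h23 (h34.trans h4T)
        (by rw [Nat.mod_add_div]; exact hxB) (hri2 _)
      exact ⟨k+1, 2*k+1, _, xB % (k+1), xB / (k+1), P2, P3, Or.inr ⟨rfl, rfl⟩, Or.inl ⟨rfl, rfl⟩,
        hv2 _, by omega, by omega, H.1, H.2⟩
    · -- xB % (k+1) = k
      have hBm : xB % (k+1) = k := by
        have := Nat.mod_lt xB (show 0 < k+1 by omega); omega
      obtain ⟨j, hjeq⟩ : ∃ j, xB = k + (k+1)*j :=
        ⟨xB / (k+1), by have := Nat.mod_add_div xB (k+1); omega⟩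
      have hjk : j < k := by
        by_contra hcon
        push_neg at hcon
        have h2 : (k+1)*k ≤ (k+1)*j := Nat.mul_le_mul_left _ hcon
        have h3 : k*(k+1) = (k+1)*k := Nat.mul_comm _ _
        linarith
      -- decompose xA
      obtain ⟨a2, a3, hxAeq, ha2, ha3⟩ : ∃ a2 a3, xA = a2 + (k+1)*a3 ∧ a2 ≤ k ∧ a3 ≤ k := by
        refine ⟨xA % (k+1), xA / (k+1), (Nat.mod_add_div xA (k+1)).symm,
          by have := Nat.mod_lt xA (show 0 < k+1 by omega); omega, ?_⟩
        have h1 : xA / (k+1) ≤ (k*(k+1)) / (k+1) := Nat.div_le_div_right hxAle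
        rwa [Nat.mul_div_cancel _ (show 0 < k+1 by omega)] at h1
      have hxAcast : ((a2 + (k+1)*a3 : ℕ) : ZMod (k^2+k+1))
          = (ρ : ZMod (k^2+k+1)) - ((P3 : ZMod (k^2+k+1)) - (P1 : ZMod (k^2+k+1)))
            - ((k : ZMod (k^2+k+1))+1) * ((T : ZMod (k^2+k+1)) - (P3 : ZMod (k^2+k+1))) := by
        rw [← hxAeq]; exact hxA
      by_cases htA : ((τ : ZMod (k+2)) - (T : ZMod (k+2)) - ((a2:ℕ) : ZMod (k+2)) - ((a3:ℕ) : ZMod (k+2))).val ≤ k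
      · -- split A canonical
        have H := use_split k τ ρ P1 P3 T a2 a3
          (((τ : ZMod (k+2)) - (T : ZMod (k+2)) - ((a2:ℕ) : ZMod (k+2)) - ((a3:ℕ) : ZMod (k+2))).val)
          (h12.trans h23) (h34.trans h4T) hxAcast (hri2 _)
        exact ⟨k, 2*k+1, _, a2, a3, P1, P3, Or.inl ⟨rfl, rfl⟩, Or.inl ⟨rfl, rfl⟩,
          htA, by omega, by omega, H.1, H.2⟩
      · have htA1 : ((τ : ZMod (k+2)) - (T : ZMod (k+2)) - ((a2:ℕ) : ZMod (k+2)) - ((a3:ℕ) : ZMod (k+2))).val = k+1 := by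
          have := hv2 ((τ : ZMod (k+2)) - (T : ZMod (k+2)) - ((a2:ℕ) : ZMod (k+2)) - ((a3:ℕ) : ZMod (k+2)))
          omega
        have hbad : (τ : ZMod (k+2)) - (T : ZMod (k+2)) - ((a2:ℕ) : ZMod (k+2)) - ((a3:ℕ) : ZMod (k+2)) = -1 := by
          rw [← hri2 ((τ : ZMod (k+2)) - (T : ZMod (k+2)) - ((a2:ℕ) : ZMod (k+2)) - ((a3:ℕ) : ZMod (k+2))), htA1]
          exact hkm
        by_cases hXA : xA < k
        · -- split A second rep : s1 = 0, s2 = xA+1, s3 = k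
          have ha3z : a3 = 0 := by nlinarith
          have ha2x : a2 = xA := by subst ha3z; omega
          have H := use_split k τ ρ P1 P3 T (xA+1) k 0 (h12.trans h23) (h34.trans h4T)
            (by
              have : ((xA+1 + (k+1)*k : ℕ) : ZMod (k^2+k+1))
                  = ((xA : ℕ) : ZMod (k^2+k+1)) + ((k*(k+1) : ℕ) : ZMod (k^2+k+1)) + 1 := by
                push_cast; ring
              rw [this, hxA, hm1]; ring)
            (by
              have hsub : ((a2:ℕ) : ZMod (k+2)) = ((xA:ℕ) : ZMod (k+2)) := by rw [ha2x]
              have hsub3 : ((a3:ℕ) : ZMod (k+2)) = 0 := by rw [ha3z]; simp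
              rw [hsub, hsub3] at hbad
              push_cast at hbad ⊢
              linear_combination -hbad + hm2)
          exact ⟨k, 2*k+1, 0, xA+1, k, P1, P3, Or.inl ⟨rfl, rfl⟩, Or.inl ⟨rfl, rfl⟩,
            by omega, by omega, by omega, H.1, H.2⟩
        · -- split D
          push_neg at hXA
          obtain ⟨d2, d3, hxDeq, hd2, hd3⟩ : ∃ d2 d3, xD = d2 + (k+1)*d3 ∧ d2 ≤ k ∧ d3 ≤ k := by
            refine ⟨xD % (k+1), xD / (k+1), (Nat.mod_add_div xD (k+1)).symm,
              by have := Nat.mod_lt xD (show 0 < k+1 by omega); omega, ?_⟩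
            have h1 : xD / (k+1) ≤ (k*(k+1)) / (k+1) := Nat.div_le_div_right hxDle
            rwa [Nat.mul_div_cancel _ (show 0 < k+1 by omega)] at h1
          have hxDcast : ((d2 + (k+1)*d3 : ℕ) : ZMod (k^2+k+1))
              = (ρ : ZMod (k^2+k+1)) - ((P4 : ZMod (k^2+k+1)) - (P1 : ZMod (k^2+k+1)))
                - ((k : ZMod (k^2+k+1))+1) * ((T : ZMod (k^2+k+1)) - (P4 : ZMod (k^2+k+1))) := by
            rw [← hxDeq]; exact hxD
          -- relation : xA = xD + xB - xC in ZMod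
          have hrel : ((xA : ℕ) : ZMod (k^2+k+1)) = ((xD + (j+1)*(k+1) : ℕ) : ZMod (k^2+k+1)) := by
            have h1 : ((xA : ℕ) : ZMod (k^2+k+1)) + ((xC : ℕ) : ZMod (k^2+k+1))
                = ((xD : ℕ) : ZMod (k^2+k+1)) + ((xB : ℕ) : ZMod (k^2+k+1)) := by
              rw [hxA, hxB, hxC, hxD]; ring
            have h2 : ((xC : ℕ) : ZMod (k^2+k+1)) = -1 := by rw [hCv]; exact hm1
            have h3 : ((xB : ℕ) : ZMod (k^2+k+1)) = ((k + (k+1)*j : ℕ) : ZMod (k^2+k+1)) := by rw [← hjeq]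
            rw [h2, h3] at h1
            push_cast at h1 ⊢
            linear_combination h1
          have hprod : (k+1)*(k-1) + k + 1 = k*(k+1) := by
            obtain ⟨e, he⟩ : ∃ e, k = e + 1 := ⟨k-1, by omega⟩
            subst he
            simp only [Nat.add_sub_cancel]
            ring
          -- now split into cases on d2, d3
          by_cases hd2p : 1 ≤ d2
          · -- d2 ≥ 1
            have hd3k : d3 < k := by
              by_contra hcon
              push_neg at hcon
              have hd3e : d3 = k := by omega
              subst hd3e
              nlinarith
            by_cases hw : xD + (j+1)*(k+1) ≤ k*(k+1)
            · -- no wrap : xA = xD + (j+1)*(k+1)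
              have hxAval : xA = d2 + (k+1)*(d3 + (j+1)) := by
                have h0 : xA = xD + (j+1)*(k+1) :=
                  cast_inj_small k _ _ hxAle hw hrel
                rw [h0, hxDeq]; ring
              obtain ⟨he2, he3⟩ := rep_uniq k a2 a3 d2 (d3 + (j+1)) xA ha2 hd2 hxAeq hxAval
              have H := use_split k τ ρ P1 P4 T d2 d3 j (h12.trans (h23.trans h34)) h4T
                (by rw [← hxDeq]; exact hxD)
                (by
                  rw [he2, he3] at hbad
                  push_cast at hbad ⊢
                  linear_combination -hbad)
              exact ⟨k, 2*k+2, j, d2, d3, P1, P4, Or.inl ⟨rfl, rfl⟩, Or.inr ⟨rfl, rfl⟩,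
                by omega, by omega, by omega, H.1, H.2⟩
            · -- wrap
              push_neg at hw
              have hTik : k ≤ d3 + (j+1) := by
                by_contra hcon
                push_neg at hcon
                have h1 : d3 + (j+1) ≤ k-1 := by omega
                have h2 : (k+1)*(d3+(j+1)) ≤ (k+1)*(k-1) := Nat.mul_le_mul_left _ h1
                have h4 : xD + (j+1)*(k+1) = d2 + (k+1)*(d3+(j+1)) := by rw [hxDeq]; ring
                omega
              have hVeq : (d2 - 1) + (k+1)*(d3 + (j+1) - k) + (k^2+k+1) = xD + (j+1)*(k+1) := by
                have hz := congrArg (Nat.cast (R := ℤ)) hxDeq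
                push_cast at hz
                zify [hd2p, hTik]
                linear_combination -hz
              have hVle : (d2 - 1) + (k+1)*(d3 + (j+1) - k) ≤ k*(k+1) := by
                have h1 : d3 + (j+1) - k ≤ k-1 := by omega
                have h2 : (k+1)*(d3 + (j+1) - k) ≤ (k+1)*(k-1) := Nat.mul_le_mul_left _ h1
                omega
              have hxAval : xA = (d2 - 1) + (k+1)*(d3 + (j+1) - k) := by
                refine cast_inj_small k _ _ hxAle hVle ?_
                rw [hrel, ← hVeq]
                push_cast
                have hMz : ((k^2+k+1 : ℕ) : ZMod (k^2+k+1)) = 0 := ZMod.natCast_self _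
                push_cast at hMz
                linear_combination hMz
              obtain ⟨he2, he3⟩ := rep_uniq k a2 a3 (d2-1) (d3 + (j+1) - k) xA ha2 (by omega) hxAeq hxAval
              have H := use_split k τ ρ P1 P4 T d2 d3 (j+1) (h12.trans (h23.trans h34)) h4T
                (by rw [← hxDeq]; exact hxD)
                (by
                  rw [he2, he3] at hbad
                  push_cast [Nat.cast_sub hd2p, Nat.cast_sub hTik] at hbad ⊢
                  linear_combination -hbad + hm2)
              exact ⟨k, 2*k+2, j+1, d2, d3, P1, P4, Or.inl ⟨rfl, rfl⟩, Or.inr ⟨rfl, rfl⟩,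
                by omega, by omega, by omega, H.1, H.2⟩
          · -- d2 = 0
            have hd2z : d2 = 0 := by omega
            subst hd2z
            rcases Nat.lt_or_ge d3 1 with hd30 | hd31
            · -- d3 = 0 : xD = 0
              have hd3z : d3 = 0 := by omega
              subst hd3z
              have hxD0 : xD = 0 := by simpa using hxDeq
              have hxAval : xA = 0 + (k+1)*(j+1) := by
                refine cast_inj_small k _ _ hxAle ?_ ?_
                · have h2 : (k+1)*(j+1) ≤ (k+1)*k := Nat.mul_le_mul_left _ (by omega)
                  have h3 : (k+1)*k = k*(k+1) := Nat.mul_comm _ _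
                  omega
                · rw [hrel, hxD0]
                  push_cast
                  ring
              obtain ⟨he2, he3⟩ := rep_uniq k a2 a3 0 (j+1) xA ha2 (by omega) hxAeq hxAval
              have H := use_split k τ ρ P1 P4 T 0 0 j (h12.trans (h23.trans h34)) h4T
                hxDcast
                (by
                  rw [he2, he3] at hbad
                  push_cast at hbad ⊢
                  linear_combination -hbad)
              exact ⟨k, 2*k+2, j, 0, 0, P1, P4, Or.inl ⟨rfl, rfl⟩, Or.inr ⟨rfl, rfl⟩,
                by omega, by omega, by omega, H.1, H.2⟩
            · rcases Nat.lt_or_ge d3 k with hd3k | hd3k2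
              · -- 1 ≤ d3 ≤ k-1 : two representations, choose by value
                by_cases ht1 : ((τ : ZMod (k+2)) - (T : ZMod (k+2)) - ((0:ℕ) : ZMod (k+2)) - ((d3:ℕ) : ZMod (k+2))).val ≤ k
                · -- rep 1 : s2 = 0, s3 = d3
                  have H := use_split k τ ρ P1 P4 T 0 d3
                    (((τ : ZMod (k+2)) - (T : ZMod (k+2)) - ((0:ℕ) : ZMod (k+2)) - ((d3:ℕ) : ZMod (k+2))).val)
                    (h12.trans (h23.trans h34)) h4T hxDcast (hri2 _)
                  exact ⟨k, 2*k+2, _, 0, d3, P1, P4, Or.inl ⟨rfl, rfl⟩, Or.inr ⟨rfl, rfl⟩,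
                    ht1, by omega, by omega, H.1, H.2⟩
                · -- rep 2 : s2 = k+1, s3 = d3-1, s1 = 1
                  have ht11 : ((τ : ZMod (k+2)) - (T : ZMod (k+2)) - ((0:ℕ) : ZMod (k+2)) - ((d3:ℕ) : ZMod (k+2))).val = k+1 := by
                    have := hv2 ((τ : ZMod (k+2)) - (T : ZMod (k+2)) - ((0:ℕ) : ZMod (k+2)) - ((d3:ℕ) : ZMod (k+2)))
                    omega
                  have hbad1 : (τ : ZMod (k+2)) - (T : ZMod (k+2)) - ((0:ℕ) : ZMod (k+2)) - ((d3:ℕ) : ZMod (k+2)) = -1 := by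
                    rw [← hri2 ((τ : ZMod (k+2)) - (T : ZMod (k+2)) - ((0:ℕ) : ZMod (k+2)) - ((d3:ℕ) : ZMod (k+2))), ht11]
                    exact hkm
                  have hnat : (k+1) + (k+1)*(d3-1) = 0 + (k+1)*d3 := by
                    obtain ⟨e, he⟩ : ∃ e, d3 = e + 1 := ⟨d3-1, by omega⟩
                    subst he
                    simp only [Nat.add_sub_cancel]
                    ring
                  have H := use_split k τ ρ P1 P4 T (k+1) (d3-1) 1
                    (h12.trans (h23.trans h34)) h4T
                    (by rw [hnat]; exact hxDcast)
                    (by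
                      push_cast [Nat.cast_sub hd31] at hbad1 ⊢
                      linear_combination -hbad1 + hm2)
                  exact ⟨k, 2*k+2, 1, k+1, d3-1, P1, P4, Or.inl ⟨rfl, rfl⟩, Or.inr ⟨rfl, rfl⟩,
                    by omega, by omega, by omega, H.1, H.2⟩
              · -- d3 = k : xD = (k+1)*k
                have hd3e : d3 = k := by omega
                rw [hd3e] at hxDeq hxDcast
                have hxAval : xA = k + (k+1)*j := by
                  refine cast_inj_small k _ _ hxAle ?_ ?_
                  · have h2 : (k+1)*j ≤ (k+1)*k := Nat.mul_le_mul_left _ (by omega)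
                    omega
                  · rw [hrel, hxDeq]
                    have h5 : ((0 + (k+1)*k + (j+1)*(k+1) : ℕ) : ZMod (k^2+k+1))
                        = ((k*(k+1) : ℕ) : ZMod (k^2+k+1)) + ((k + (k+1)*j : ℕ) : ZMod (k^2+k+1)) + 1 := by
                      push_cast; ring
                    rw [h5, hm1]
                    ring
                obtain ⟨he2, he3⟩ := rep_uniq k a2 a3 k j xA ha2 (le_refl k) hxAeq hxAval
                have hnat : (k+1) + (k+1)*(k-1) = 0 + (k+1)*k := by
                  obtain ⟨e, he⟩ : ∃ e, k = e + 1 := ⟨k-1, by omega⟩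
                  subst he
                  simp only [Nat.add_sub_cancel]
                  ring
                have H := use_split k τ ρ P1 P4 T (k+1) (k-1) (j+1)
                  (h12.trans (h23.trans h34)) h4T
                  (by rw [hnat]; exact hxDcast)
                  (by
                    rw [he2, he3] at hbad
                    push_cast [Nat.cast_sub (show 1 ≤ k by omega)] at hbad ⊢
                    linear_combination -hbad + hm2)
                exact ⟨k, 2*k+2, j+1, k+1, k-1, P1, P4, Or.inl ⟨rfl, rfl⟩, Or.inr ⟨rfl, rfl⟩,
                  by omega, by omega, by omega, H.1, H.2⟩

private def bitOf {n j : ℕ} (G : Face n j) (l : Fin n) : Bool :=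
  if h : l ∈ G.S then false else G.f l h

private lemma bitOf_mem {n j : ℕ} (G : Face n j) (l : Fin n) (h : l ∈ G.S) :
    bitOf G l = false := dif_pos h

private lemma bitOf_not_mem {n j : ℕ} (G : Face n j) (l : Fin n) (h : l ∉ G.S) :
    bitOf G l = G.f l h := dif_neg h

private def lo {n : ℕ} (G : Face n 2) : Fin n :=
  G.S.min' (Finset.card_pos.mp (by rw [G.hcard]; omega))

private def hi {n : ℕ} (G : Face n 2) : Fin n :=
  G.S.max' (Finset.card_pos.mp (by rw [G.hcard]; omega))

private def uu {n : ℕ} (G : Face n 2) : ℕ :=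
  (Finset.univ.filter (fun l => bitOf G l = true ∧ l < lo G)).card

private def vv {n : ℕ} (G : Face n 2) : ℕ :=
  (Finset.univ.filter (fun l => bitOf G l = true ∧ lo G < l ∧ l < hi G)).card

private def ww {n : ℕ} (G : Face n 2) : ℕ :=
  (Finset.univ.filter (fun l => bitOf G l = true ∧ hi G < l)).card

private def chi (k n : ℕ) (G : Face n 2) : Fin ((k^2+k+1)*(k+2)) :=
  finProdFinEquiv (⟨(vv G + (k+1) * ww G) % (k^2+k+1), Nat.mod_lt _ (by positivity)⟩,
    ⟨(uu G + vv G + ww G) % (k+2), Nat.mod_lt _ (by omega)⟩)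

private lemma chi_poly (k n : ℕ) (hk : 1 ≤ k) :
    Polychromatic (3*k+2) (chi k n) := by
  intro F c
  classical
  -- enumeration of F.S
  have hcardT : F.S.card = 3*k+2 := F.hcard
  set e := F.S.orderIsoOfFin hcardT with he
  set EN : ℕ → Fin n := fun x => (e ⟨min x (3*k+1), by omega⟩ : Fin n) with hEN
  have hENmem : ∀ x, EN x ∈ F.S := fun x => (e _).2
  have hENmono : ∀ x y, x < y → y ≤ 3*k+1 → EN x < EN y := by
    intro x y hxy hy
    have : (⟨min x (3*k+1), by omega⟩ : Fin (3*k+2)) < ⟨min y (3*k+1), by omega⟩ := by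
      simp only [Fin.mk_lt_mk]; omega
    exact Subtype.coe_lt_coe.mpr (e.strictMono this)
  -- counting functions
  set cnt : Fin n → ℕ := fun i => (Finset.univ.filter (fun l => bitOf F l = true ∧ l < i)).card with hcnt
  set Tot : ℕ := (Finset.univ.filter (fun l => bitOf F l = true)).card with hTot
  have hcnt_mono : ∀ i j' : Fin n, i ≤ j' → cnt i ≤ cnt j' := by
    intro i j' hij
    apply Finset.card_le_card
    refine Finset.monotone_filter_right _ ?_
    intro l _ hl
    exact ⟨hl.1, lt_of_lt_of_le hl.2 hij⟩
  have hcnt_le : ∀ i : Fin n, cnt i ≤ Tot := by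
    intro i
    apply Finset.card_le_card
    refine Finset.monotone_filter_right _ ?_
    intro l _ hl
    exact hl.1
  -- count of T-elements below EN x
  have hcount : ∀ x : ℕ, x ≤ 3*k+1 →
      (Finset.univ.filter (fun l => l ∈ F.S ∧ l < EN x)).card = x := by
    intro x hx
    have himg : Finset.univ.filter (fun l => l ∈ F.S ∧ l < EN x)
        = (Finset.univ.filter (fun y : Fin (3*k+2) => y < ⟨min x (3*k+1), by omega⟩)).image
            (fun y => (e y : Fin n)) := by
      ext l
      simp only [Finset.mem_filter, Finset.mem_univ, true_and, Finset.mem_image]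
      constructor
      · rintro ⟨hlT, hlt⟩
        refine ⟨e.symm ⟨l, hlT⟩, ?_, by simp⟩
        have : (e (e.symm ⟨l, hlT⟩) : Fin n) = l := by simp
        rw [← e.lt_iff_lt]
        apply Subtype.coe_lt_coe.mp
        simp only [OrderIso.apply_symm_apply]
        exact hlt
      · rintro ⟨y, hy, rfl⟩
        exact ⟨(e y).2, Subtype.coe_lt_coe.mpr (e.strictMono hy)⟩
    rw [himg, Finset.card_image_of_injective _
      (fun a b hab => e.injective (Subtype.coe_injective hab))]
    have : Finset.univ.filter (fun y : Fin (3*k+2) => y < (⟨min x (3*k+1), by omega⟩ : Fin (3*k+2)))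
        = (Finset.Iio ⟨min x (3*k+1), by omega⟩ : Finset (Fin (3*k+2))) := by
      ext y; simp [Finset.mem_Iio]
    rw [this, Fin.card_Iio]
    show min x (3*k+1) = x
    omega
  have hcountT : (Finset.univ.filter (fun l => l ∈ F.S)).card = 3*k+2 := by
    rw [Finset.filter_univ_mem]; exact hcardT
  -- decode the color
  set ρ := ((finProdFinEquiv.symm c).1 : Fin (k^2+k+1)).val with hρ
  set τ := ((finProdFinEquiv.symm c).2 : Fin (k+2)).val with hτ
  -- apply the core lemma
  obtain ⟨p, q, s1, s2, s3, Pp, Pq, hp, hq, hs1, hs2, hs3, hc1, hc2⟩ :=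
    core k τ ρ (cnt (EN k)) (cnt (EN (k+1))) (cnt (EN (2*k+1))) (cnt (EN (2*k+2))) Tot hk
      (hcnt_mono _ _ (le_of_lt (hENmono k (k+1) (by omega) (by omega))))
      (hcnt_mono _ _ (le_of_lt (hENmono (k+1) (2*k+1) (by omega) (by omega))))
      (hcnt_mono _ _ (le_of_lt (hENmono (2*k+1) (2*k+2) (by omega) (by omega))))
      (hcnt_le _)
  have hPp : Pp = cnt (EN p) ∧ p ≤ k+1 := by
    rcases hp with ⟨h1, h2⟩ | ⟨h1, h2⟩ <;> subst h1 <;> subst h2 <;> exact ⟨rfl, by omega⟩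
  have hPq : Pq = cnt (EN q) ∧ 2*k+1 ≤ q ∧ q ≤ 2*k+2 := by
    rcases hq with ⟨h1, h2⟩ | ⟨h1, h2⟩ <;> subst h1 <;> subst h2 <;> exact ⟨rfl, by omega, by omega⟩
  obtain ⟨hPpe, hple⟩ := hPp
  obtain ⟨hPqe, hqle, hqle2⟩ := hPq
  have hpq : p < q := by omega
  have hq31 : q ≤ 3*k+1 := by omega
  set i0 := EN p with hi0
  set j0 := EN q with hj0
  have hij : i0 < j0 := hENmono p q hpq hq31
  set A1 := EN (p - s1) with hA1
  set A2 := EN (q - s2) with hA2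
  set A3 := EN (3*k+2 - s3) with hA3
  have hA1le : A1 ≤ i0 := by
    rcases Nat.lt_or_ge (p - s1) p with h | h
    · exact le_of_lt (hENmono _ _ h (by omega))
    · have : p - s1 = p := by omega
      rw [hA1, this]
  have hA2gt : i0 < A2 := hENmono p (q - s2) (by omega) (by omega)
  have hA2le : A2 ≤ j0 := by
    rcases Nat.lt_or_ge (q - s2) q with h | h
    · exact le_of_lt (hENmono _ _ h hq31)
    · have : q - s2 = q := by omega
      rw [hA2, this]
  -- the 2-face G
  set S' : Finset (Fin n) := {i0, j0} with hS'
  have hcard2 : S'.card = 2 := Finset.card_pair hij.ne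
  set G : Face n 2 := ⟨S', hcard2, fun l _ =>
    if hT : l ∈ F.S then
      decide ((A1 ≤ l ∧ l < i0) ∨ (A2 ≤ l ∧ i0 < l ∧ l < j0) ∨ (0 < s3 ∧ A3 ≤ l ∧ j0 < l))
    else F.f l hT⟩ with hG
  have hGS : G.S = S' := rfl
  have hsub : G.S ⊆ F.S := by
    intro x hx
    rcases Finset.mem_insert.mp hx with h | h
    · rw [h]; exact hENmem _
    · rw [Finset.mem_singleton.mp h]; exact hENmem _
  refine ⟨G, ⟨hsub, fun l hl => by
    have hl' : l ∉ G.S := fun hc => hl (hsub hc)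
    show (if hT : l ∈ F.S then _ else F.f l hT) = F.f l hl
    rw [dif_neg hl]⟩, ?_⟩
  -- identify lo and hi
  have hloG : lo G = i0 := by
    have hmem : lo G ∈ S' := Finset.min'_mem _ _
    have hle : lo G ≤ i0 := Finset.min'_le _ _ (Finset.mem_insert_self _ _)
    rcases Finset.mem_insert.mp hmem with h | h
    · exact h
    · rw [Finset.mem_singleton.mp h] at hle ⊢
      exact absurd (lt_of_lt_of_le hij hle) (lt_irrefl _)
  have hhiG : hi G = j0 := by
    have hmem : hi G ∈ S' := Finset.max'_mem _ _
    have hle : j0 ≤ hi G := Finset.le_max' _ _ (Finset.mem_insert_of_mem (Finset.mem_singleton_self _))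
    rcases Finset.mem_insert.mp hmem with h | h
    · rw [h] at hle ⊢
      exact absurd (lt_of_lt_of_le hij hle) (lt_irrefl _)
    · exact Finset.mem_singleton.mp h
  -- bit values of G
  have hbitG : ∀ l : Fin n, l ∉ S' → bitOf G l =
      (if l ∈ F.S then
        decide ((A1 ≤ l ∧ l < i0) ∨ (A2 ≤ l ∧ i0 < l ∧ l < j0) ∨ (0 < s3 ∧ A3 ≤ l ∧ j0 < l))
      else bitOf F l) := by
    intro l hl
    rw [bitOf_not_mem G l (by rw [hGS]; exact hl)]
    show (if hT : l ∈ F.S then _ else F.f l hT) = _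
    by_cases hT : l ∈ F.S
    · rw [dif_pos hT, if_pos hT]
    · rw [dif_neg hT, if_neg hT, bitOf_not_mem F l hT]
  have hENle : ∀ x y : ℕ, x ≤ y → y ≤ 3*k+1 → EN x ≤ EN y := by
    intro x y hxy hy
    rcases Nat.lt_or_ge x y with h | h
    · exact le_of_lt (hENmono x y h hy)
    · have : x = y := by omega
      rw [this]
  -- zone counting
  have hzone : ∀ a b : ℕ, a ≤ b → b ≤ 3*k+1 →
      (Finset.univ.filter (fun l => l ∈ F.S ∧ EN a ≤ l ∧ l < EN b)).card = b - a := by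
    intro a b hab hb
    have hsd : Finset.univ.filter (fun l => l ∈ F.S ∧ EN a ≤ l ∧ l < EN b)
        = Finset.univ.filter (fun l => l ∈ F.S ∧ l < EN b)
          \ Finset.univ.filter (fun l => l ∈ F.S ∧ l < EN a) := by
      ext l
      simp only [Finset.mem_filter, Finset.mem_univ, true_and, Finset.mem_sdiff, not_and, not_lt]
      constructor
      · rintro ⟨hT, hA, hB⟩
        exact ⟨⟨hT, hB⟩, fun _ => hA⟩
      · rintro ⟨⟨hT, hB⟩, hA⟩
        exact ⟨hT, hA hT, hB⟩
    have hss : Finset.univ.filter (fun l => l ∈ F.S ∧ l < EN a)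
        ⊆ Finset.univ.filter (fun l => l ∈ F.S ∧ l < EN b) := by
      refine Finset.monotone_filter_right _ ?_
      intro l _ hl
      exact ⟨hl.1, lt_of_lt_of_le hl.2 (hENle a b hab hb)⟩
    rw [hsd, Finset.card_sdiff_of_subset hss, hcount a (by omega), hcount b hb]
  have hzoneTop : ∀ a : ℕ, a ≤ 3*k+1 →
      (Finset.univ.filter (fun l => l ∈ F.S ∧ EN a ≤ l)).card = (3*k+2) - a := by
    intro a ha
    have hsd : Finset.univ.filter (fun l => l ∈ F.S ∧ EN a ≤ l)
        = Finset.univ.filter (fun l => l ∈ F.S)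
          \ Finset.univ.filter (fun l => l ∈ F.S ∧ l < EN a) := by
      ext l
      simp only [Finset.mem_filter, Finset.mem_univ, true_and, Finset.mem_sdiff, not_and, not_lt]
      constructor
      · rintro ⟨hT, hA⟩
        exact ⟨hT, fun _ => hA⟩
      · rintro ⟨hT, hA⟩
        exact ⟨hT, hA hT⟩
    have hss : Finset.univ.filter (fun l => l ∈ F.S ∧ l < EN a)
        ⊆ Finset.univ.filter (fun l => l ∈ F.S) := by
      refine Finset.monotone_filter_right _ ?_
      intro l _ hl
      exact hl.1
    rw [hsd, Finset.card_sdiff_of_subset hss, hcount a ha, hcountT]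
  -- not in S' helpers
  have hnotS'lo : ∀ l : Fin n, l < i0 → l ∉ S' := by
    intro l hl hc
    rcases Finset.mem_insert.mp hc with h | h
    · rw [h] at hl; exact absurd hl (lt_irrefl _)
    · rw [Finset.mem_singleton.mp h] at hl
      exact absurd (hl.trans hij) (lt_irrefl _)
  have hnotS'mid : ∀ l : Fin n, i0 < l → l < j0 → l ∉ S' := by
    intro l h1 h2 hc
    rcases Finset.mem_insert.mp hc with h | h
    · rw [h] at h1; exact absurd h1 (lt_irrefl _)
    · rw [Finset.mem_singleton.mp h] at h2; exact absurd h2 (lt_irrefl _)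
  have hnotS'hi : ∀ l : Fin n, j0 < l → l ∉ S' := by
    intro l hl hc
    rcases Finset.mem_insert.mp hc with h | h
    · rw [h] at hl; exact absurd (hij.trans hl) (lt_irrefl _)
    · rw [Finset.mem_singleton.mp h] at hl; exact absurd hl (lt_irrefl _)
  have hbitF_notS : ∀ l : Fin n, bitOf F l = true → l ∉ F.S := by
    intro l hb hc
    rw [bitOf_mem F l hc] at hb
    exact absurd hb (by simp)
  -- u count
  have hu : uu G = cnt i0 + s1 := by
    have hloG' : lo G = i0 := hloG
    have hsplit : Finset.univ.filter (fun l => bitOf G l = true ∧ l < lo G)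
        = (Finset.univ.filter (fun l => bitOf F l = true ∧ l < i0))
          ∪ (Finset.univ.filter (fun l => l ∈ F.S ∧ A1 ≤ l ∧ l < i0)) := by
      ext l
      simp only [Finset.mem_filter, Finset.mem_univ, true_and, Finset.mem_union, hloG']
      constructor
      · rintro ⟨hb, hlt⟩
        rw [hbitG l (hnotS'lo l hlt)] at hb
        by_cases hT : l ∈ F.S
        · right
          rw [if_pos hT] at hb
          rcases of_decide_eq_true hb with h1 | h2 | h3
          · exact ⟨hT, h1.1, hlt⟩
          · exact absurd (h2.2.1.trans hlt) (lt_irrefl _)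
          · exact absurd ((hij.trans h3.2.2).trans hlt) (lt_irrefl _)
        · left
          rw [if_neg hT] at hb
          exact ⟨hb, hlt⟩
      · rintro (⟨hb, hlt⟩ | ⟨hT, hA, hlt⟩)
        · have hT : l ∉ F.S := hbitF_notS l hb
          rw [hbitG l (hnotS'lo l hlt), if_neg hT]
          exact ⟨hb, hlt⟩
        · rw [hbitG l (hnotS'lo l hlt), if_pos hT]
          exact ⟨decide_eq_true (Or.inl ⟨hA, hlt⟩), hlt⟩
    have hdisj : Disjoint (Finset.univ.filter (fun l => bitOf F l = true ∧ l < i0))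
        (Finset.univ.filter (fun l => l ∈ F.S ∧ A1 ≤ l ∧ l < i0)) := by
      rw [Finset.disjoint_left]
      intro a ha hb
      simp only [Finset.mem_filter, Finset.mem_univ, true_and] at ha hb
      exact (hbitF_notS a ha.1) hb.1
    show (Finset.univ.filter (fun l => bitOf G l = true ∧ l < lo G)).card = _
    rw [hsplit, Finset.card_union_of_disjoint hdisj, hzone (p - s1) p (by omega) (by omega)]
    have : p - (p - s1) = s1 := by omega
    rw [this]
  -- v count
  have hv : vv G = (cnt j0 - cnt i0) + s2 := by
    have hsplit : Finset.univ.filter (fun l => bitOf G l = true ∧ lo G < l ∧ l < hi G)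
        = (Finset.univ.filter (fun l => bitOf F l = true ∧ i0 < l ∧ l < j0))
          ∪ (Finset.univ.filter (fun l => l ∈ F.S ∧ A2 ≤ l ∧ l < j0)) := by
      ext l
      simp only [Finset.mem_filter, Finset.mem_univ, true_and, Finset.mem_union, hloG, hhiG]
      constructor
      · rintro ⟨hb, hlt1, hlt2⟩
        rw [hbitG l (hnotS'mid l hlt1 hlt2)] at hb
        by_cases hT : l ∈ F.S
        · right
          rw [if_pos hT] at hb
          rcases of_decide_eq_true hb with h1 | h2 | h3
          · exact absurd (hlt1.trans h1.2) (lt_irrefl _)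
          · exact ⟨hT, h2.1, hlt2⟩
          · exact absurd (h3.2.2.trans hlt2) (lt_irrefl _)
        · left
          rw [if_neg hT] at hb
          exact ⟨hb, hlt1, hlt2⟩
      · rintro (⟨hb, hlt1, hlt2⟩ | ⟨hT, hA, hlt⟩)
        · have hT : l ∉ F.S := hbitF_notS l hb
          rw [hbitG l (hnotS'mid l hlt1 hlt2), if_neg hT]
          exact ⟨hb, hlt1, hlt2⟩
        · have hgt : i0 < l := lt_of_lt_of_le hA2gt hA
          rw [hbitG l (hnotS'mid l hgt hlt), if_pos hT]
          exact ⟨decide_eq_true (Or.inr (Or.inl ⟨hA, hgt, hlt⟩)), hgt, hlt⟩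
    have hdisj : Disjoint (Finset.univ.filter (fun l => bitOf F l = true ∧ i0 < l ∧ l < j0))
        (Finset.univ.filter (fun l => l ∈ F.S ∧ A2 ≤ l ∧ l < j0)) := by
      rw [Finset.disjoint_left]
      intro a ha hb
      simp only [Finset.mem_filter, Finset.mem_univ, true_and] at ha hb
      exact (hbitF_notS a ha.1) hb.1
    have hout : (Finset.univ.filter (fun l => bitOf F l = true ∧ i0 < l ∧ l < j0)).card
        = cnt j0 - cnt i0 := by
      have hsd : Finset.univ.filter (fun l => bitOf F l = true ∧ i0 < l ∧ l < j0)
          = Finset.univ.filter (fun l => bitOf F l = true ∧ l < j0)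
            \ Finset.univ.filter (fun l => bitOf F l = true ∧ l < i0) := by
        ext l
        simp only [Finset.mem_filter, Finset.mem_univ, true_and, Finset.mem_sdiff, not_and, not_lt]
        constructor
        · rintro ⟨hb, h1, h2⟩
          exact ⟨⟨hb, h2⟩, fun _ => le_of_lt h1⟩
        · rintro ⟨⟨hb, h2⟩, h1⟩
          have hle := h1 hb
          have hne : l ≠ i0 := by
            intro hc
            rw [hc] at hb
            rw [bitOf_mem F i0 (hENmem p)] at hb
            exact absurd hb (by simp)
          exact ⟨hb, lt_of_le_of_ne hle (Ne.symm hne), h2⟩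
      have hss : Finset.univ.filter (fun l => bitOf F l = true ∧ l < i0)
          ⊆ Finset.univ.filter (fun l => bitOf F l = true ∧ l < j0) := by
        refine Finset.monotone_filter_right _ ?_
        intro l _ hl
        exact ⟨hl.1, hl.2.trans hij⟩
      rw [hsd, Finset.card_sdiff_of_subset hss]
    show (Finset.univ.filter (fun l => bitOf G l = true ∧ lo G < l ∧ l < hi G)).card = _
    rw [hsplit, Finset.card_union_of_disjoint hdisj, hout, hzone (q - s2) q (by omega) (by omega)]
    have : q - (q - s2) = s2 := by omega
    rw [this]
  -- w count
  have hw : ww G = (Tot - cnt j0) + s3 := by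
    have hsplit : Finset.univ.filter (fun l => bitOf G l = true ∧ hi G < l)
        = (Finset.univ.filter (fun l => bitOf F l = true ∧ j0 < l))
          ∪ (Finset.univ.filter (fun l => l ∈ F.S ∧ 0 < s3 ∧ A3 ≤ l ∧ j0 < l)) := by
      ext l
      simp only [Finset.mem_filter, Finset.mem_univ, true_and, Finset.mem_union, hhiG]
      constructor
      · rintro ⟨hb, hlt⟩
        rw [hbitG l (hnotS'hi l hlt)] at hb
        by_cases hT : l ∈ F.S
        · right
          rw [if_pos hT] at hb
          rcases of_decide_eq_true hb with h1 | h2 | h3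
          · exact absurd ((hij.trans hlt).trans h1.2) (lt_irrefl _)
          · exact absurd (hlt.trans h2.2.2) (lt_irrefl _)
          · exact ⟨hT, h3.1, h3.2.1, hlt⟩
        · left
          rw [if_neg hT] at hb
          exact ⟨hb, hlt⟩
      · rintro (⟨hb, hlt⟩ | ⟨hT, hs3p, hA, hlt⟩)
        · have hT : l ∉ F.S := hbitF_notS l hb
          rw [hbitG l (hnotS'hi l hlt), if_neg hT]
          exact ⟨hb, hlt⟩
        · rw [hbitG l (hnotS'hi l hlt), if_pos hT]
          exact ⟨decide_eq_true (Or.inr (Or.inr ⟨hs3p, hA, hlt⟩)), hlt⟩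
    have hdisj : Disjoint (Finset.univ.filter (fun l => bitOf F l = true ∧ j0 < l))
        (Finset.univ.filter (fun l => l ∈ F.S ∧ 0 < s3 ∧ A3 ≤ l ∧ j0 < l)) := by
      rw [Finset.disjoint_left]
      intro a ha hb
      simp only [Finset.mem_filter, Finset.mem_univ, true_and] at ha hb
      exact (hbitF_notS a ha.1) hb.1
    have hout : (Finset.univ.filter (fun l => bitOf F l = true ∧ j0 < l)).card
        = Tot - cnt j0 := by
      have hsd : Finset.univ.filter (fun l => bitOf F l = true ∧ j0 < l)
          = Finset.univ.filter (fun l => bitOf F l = true)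
            \ Finset.univ.filter (fun l => bitOf F l = true ∧ l < j0) := by
        ext l
        simp only [Finset.mem_filter, Finset.mem_univ, true_and, Finset.mem_sdiff, not_and, not_lt]
        constructor
        · rintro ⟨hb, hlt⟩
          exact ⟨hb, fun _ => le_of_lt hlt⟩
        · rintro ⟨hb, h1⟩
          have hle := h1 hb
          have hne : l ≠ j0 := by
            intro hc
            rw [hc] at hb
            rw [bitOf_mem F j0 (hENmem q)] at hb
            exact absurd hb (by simp)
          exact ⟨hb, lt_of_le_of_ne hle (Ne.symm hne)⟩
      have hss : Finset.univ.filter (fun l => bitOf F l = true ∧ l < j0)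
          ⊆ Finset.univ.filter (fun l => bitOf F l = true) := by
        refine Finset.monotone_filter_right _ ?_
        intro l _ hl
        exact hl.1
      rw [hsd, Finset.card_sdiff_of_subset hss]
    have hin : (Finset.univ.filter (fun l => l ∈ F.S ∧ 0 < s3 ∧ A3 ≤ l ∧ j0 < l)).card = s3 := by
      rcases Nat.eq_zero_or_pos s3 with h0 | hpos
      · have : Finset.univ.filter (fun l => l ∈ F.S ∧ 0 < s3 ∧ A3 ≤ l ∧ j0 < l) = ∅ := by
          ext l
          simp only [Finset.mem_filter, Finset.mem_univ, true_and, Finset.notMem_empty, iff_false]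
          rintro ⟨_, hc, _⟩
          omega
        rw [this, Finset.card_empty, h0]
      · have hA3gt : j0 < A3 := hENmono q (3*k+2-s3) (by omega) (by omega)
        have heq : Finset.univ.filter (fun l => l ∈ F.S ∧ 0 < s3 ∧ A3 ≤ l ∧ j0 < l)
            = Finset.univ.filter (fun l => l ∈ F.S ∧ EN (3*k+2-s3) ≤ l) := by
          ext l
          simp only [Finset.mem_filter, Finset.mem_univ, true_and]
          constructor
          · rintro ⟨hT, _, hA, _⟩
            exact ⟨hT, hA⟩
          · rintro ⟨hT, hA⟩
            exact ⟨hT, hpos, hA, lt_of_lt_of_le hA3gt hA⟩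
        rw [heq, hzoneTop (3*k+2-s3) (by omega)]
        omega
    show (Finset.univ.filter (fun l => bitOf G l = true ∧ hi G < l)).card = _
    rw [hsplit, Finset.card_union_of_disjoint hdisj, hout, hin]
  -- final color computation
  have hciltj : cnt i0 ≤ cnt j0 := hcnt_mono _ _ (le_of_lt hij)
  have hcjltT : cnt j0 ≤ Tot := hcnt_le _
  have hval1 : (vv G + (k+1) * ww G) % (k^2+k+1) = ρ := by
    rw [hv, hw, ← hPpe, ← hPqe]
    rw [hc2]
    exact Nat.mod_eq_of_lt ((finProdFinEquiv.symm c).1).isLt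
  have hval2 : (uu G + vv G + ww G) % (k+2) = τ := by
    have hsum : uu G + vv G + ww G = Tot + (s1 + s2 + s3) := by
      rw [hu, hv, hw, ← hPpe, ← hPqe]
      omega
    rw [hsum, hc1]
    exact Nat.mod_eq_of_lt ((finProdFinEquiv.symm c).2).isLt
  show finProdFinEquiv (⟨(vv G + (k+1) * ww G) % (k^2+k+1), Nat.mod_lt _ (by positivity)⟩,
    ⟨(uu G + vv G + ww G) % (k+2), Nat.mod_lt _ (by omega)⟩) = c
  rw [show c = finProdFinEquiv (finProdFinEquiv.symm c) from (Equiv.apply_symm_apply _ _).symm]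
  exact congrArg _ (Prod.ext (Fin.ext hval1) (Fin.ext hval2))


theorem statement2 (k : ℕ) (hk : 1 ≤ k) (n : ℕ) (hn : 3 * k + 2 ≤ n) :
    ∃ χ : Face n 2 → Fin ((k ^ 2 + k + 1) * (k + 2)),
      Function.Surjective χ ∧ Polychromatic (3 * k + 2) χ := by
  refine ⟨chi k n, ?_, chi_poly k n hk⟩
  intro c
  obtain ⟨S0, _, hS0card⟩ := Finset.exists_subset_card_eq
    (show 3*k+2 ≤ (Finset.univ : Finset (Fin n)).card by simpa using hn)
  obtain ⟨G, _, hG⟩ := chi_poly k n hk ⟨S0, hS0card, fun _ _ => false⟩ c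
  exact ⟨G, hG⟩
end

section
/- Let t ≥ 2 and n > t be integers, set m = t²+1 and d = 2t+n−1. Define χ : ℕ³ → (ZMod m) × (ZMod n) by χ(p,q,r) = (p − t·q mod m, p + q + r mod n). Then χ is a d-polychromatic simple Q_2-coloring with m·n colors (χ is surjective and d-polychromatic). -/
set_option maxHeartbeats 1000000

lemma val_coe {k : ℕ} [NeZero k] (a : ZMod k) : ((a.val : ℕ) : ZMod k) = a := by
  simp [ZMod.natCast_val, ZMod.cast_id]

lemma pick_z {n : ℕ} [NeZero n] (c : ZMod n) (σ : ℕ) :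
    ∃ z : ℕ, z + 1 ≤ n ∧ (σ : ZMod n) + z = c := by
  refine ⟨(c - (σ : ZMod n)).val, ?_, ?_⟩
  · have := ZMod.val_lt (c - (σ : ZMod n)); omega
  · rw [val_coe]; ring

lemma pick_z2 {n : ℕ} [NeZero n] (c : ZMod n) (σ : ℕ)
    (h : c - (σ : ZMod n) ≠ ((n - 1 : ℕ) : ZMod n)) :
    ∃ z : ℕ, z + 2 ≤ n ∧ (σ : ZMod n) + z = c := by
  refine ⟨(c - (σ : ZMod n)).val, ?_, by rw [val_coe]; ring⟩
  have h1 := ZMod.val_lt (c - (σ : ZMod n))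
  have h2 : (c - (σ : ZMod n)).val ≠ n - 1 := by
    intro he; exact h (by rw [← he, val_coe])
  have h3 : 0 < n := Nat.pos_of_ne_zero (NeZero.ne n)
  omega

lemma sum_indicator (P : ℕ → Prop) [DecidablePred P] (A B C : ℕ) (hC : A + C < B)
    (h : ∀ k, A < k → k < B → (P k ↔ (A + 1 ≤ k ∧ k ≤ A + C))) :
    (∑ k ∈ Finset.Ioo A B, if P k then 1 else 0) = C := by
  have h1 : Finset.filter P (Finset.Ioo A B) = Finset.Icc (A + 1) (A + C) := by
    ext k
    simp only [Finset.mem_filter, Finset.mem_Ioo, Finset.mem_Icc]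
    constructor
    · rintro ⟨⟨h2, h3⟩, hP⟩
      exact (h k h2 h3).mp hP
    · rintro ⟨h2, h3⟩
      have hk1 : A < k := by omega
      have hk2 : k < B := by omega
      exact ⟨⟨hk1, hk2⟩, (h k hk1 hk2).mpr ⟨h2, h3⟩⟩
  rw [Finset.sum_ite, Finset.sum_const, Finset.sum_const_zero, add_zero, smul_eq_mul,
    mul_one, h1, Nat.card_Icc]
  omega

lemma card_indicator (P : ℕ → Prop) [DecidablePred P] (A B C : ℕ) (hC : A + C < B)
    (h : ∀ k, A < k → k < B → (P k ↔ (A + 1 ≤ k ∧ k ≤ A + C))) :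
    (Finset.filter P (Finset.Ioo A B)).card = C := by
  have h1 : Finset.filter P (Finset.Ioo A B) = Finset.Icc (A + 1) (A + C) := by
    ext k
    simp only [Finset.mem_filter, Finset.mem_Ioo, Finset.mem_Icc]
    constructor
    · rintro ⟨⟨h2, h3⟩, hP⟩
      exact (h k h2 h3).mp hP
    · rintro ⟨h2, h3⟩
      have hk1 : A < k := by omega
      have hk2 : k < B := by omega
      exact ⟨⟨hk1, hk2⟩, (h k hk1 hk2).mpr ⟨h2, h3⟩⟩
  rw [h1, Nat.card_Icc]
  omega

lemma rep_big (t r : ℕ) (ht : 2 ≤ t) (hr1 : 1 ≤ r) (hr2 : r ≤ t ^ 2) :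
    ∃ x y : ℕ, x + 1 ≤ t ∧ 1 ≤ y ∧ x + (t ^ 2 + 1) = t * y + r ∧ t * y + r ≤ t ^ 2 + t := by
  obtain ⟨q, e, hdm, helt⟩ : ∃ q e, t * q + e = t ^ 2 + 1 - r - 1 ∧ e < t :=
    ⟨(t ^ 2 + 1 - r - 1) / t, (t ^ 2 + 1 - r - 1) % t, Nat.div_add_mod _ _,
      Nat.mod_lt _ (by omega)⟩
  have h1 : t * (q + 1) = t * q + t := by ring
  exact ⟨t - 1 - e, q + 1, by omega, by omega, by omega, by omega⟩

lemma buildA (t : ℕ) (ht : 2 ≤ t) (j xC kC : ℕ) (hj1 : 1 ≤ j) (hj2 : j ≤ t)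
    (hxC : xC + 1 ≤ t) (hkC : kC ≤ t) (hk0 : kC = 0 → xC = 0) (hkt : kC = t → xC + 1 = t) :
    ∃ xA yA : ℕ, xA ≤ t ∧ yA + 1 ≤ t ∧
      ((xA : ZMod (t ^ 2 + 1)) - (t : ZMod (t ^ 2 + 1)) * (yA : ZMod (t ^ 2 + 1))
        = (xC : ZMod (t ^ 2 + 1)) - (t : ZMod (t ^ 2 + 1)) * (kC : ZMod (t ^ 2 + 1))
          + (j : ZMod (t ^ 2 + 1))) ∧
      (xA + yA + (t + 1) = xC + kC + j ∨ xA + yA = xC + kC + j) := by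
  obtain ⟨jv, rfl⟩ : ∃ jv, j = jv + 1 := ⟨j - 1, by omega⟩
  by_cases hk : kC = t
  · have hx : xC + 1 = t := hkt hk
    refine ⟨jv, t - 1, by omega, by omega, ?_, Or.inl (by omega)⟩
    have h1 : ((t - 1 : ℕ) : ZMod (t ^ 2 + 1)) = (t : ZMod (t ^ 2 + 1)) - 1 :=
      Nat.cast_sub (by omega)
    have h2 : ((t : ℕ) : ZMod (t ^ 2 + 1)) = (xC : ZMod (t ^ 2 + 1)) + 1 := by
      rw [← hx]; push_cast; ring
    rw [hk, h1]
    push_cast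
    linear_combination h2
  · by_cases hx2 : xC + (jv + 1) ≤ t
    · refine ⟨xC + (jv + 1), kC, by omega, by omega, ?_, Or.inr (by omega)⟩
      push_cast; ring
    · have hk1 : 1 ≤ kC := by
        rcases Nat.eq_zero_or_pos kC with h | h
        · have := hk0 h; omega
        · exact h
      obtain ⟨kv, rfl⟩ : ∃ kv, kC = kv + 1 := ⟨kC - 1, by omega⟩
      obtain ⟨w, hw⟩ : ∃ w, xC + (jv + 1) = t + w := ⟨xC + (jv + 1) - t, by omega⟩
      refine ⟨w, kv, by omega, by omega, ?_, Or.inl (by omega)⟩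
      have hcast := congrArg (fun u : ℕ => (u : ZMod (t ^ 2 + 1))) hw
      push_cast at hcast
      push_cast
      linear_combination - hcast

lemma core_s4 (t n : ℕ) (ht : 2 ≤ t) (hn : t < n) (M : ℕ → ZMod (t ^ 2 + 1))
    (c1 : ZMod (t ^ 2 + 1)) (c2 : ZMod n) :
    ∃ s1 s2 x y z : ℕ,
      t ≤ s1 ∧ s1 ≤ t + 1 ∧ 2 * t ≤ s2 ∧ s2 ≤ 2 * t + 1 ∧
      x + 1 ≤ s1 ∧ s1 + y + 1 ≤ s2 ∧ s2 + z + 1 ≤ 2 * t + n ∧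
      ((x : ZMod (t ^ 2 + 1)) - (t : ZMod (t ^ 2 + 1)) * (y : ZMod (t ^ 2 + 1))
        = c1 - (1 + (t : ZMod (t ^ 2 + 1))) * M s1 + (t : ZMod (t ^ 2 + 1)) * M s2) ∧
      ((x : ZMod n) + (y : ZMod n) + (z : ZMod n) = c2) := by
  haveI : NeZero n := ⟨by omega⟩
  haveI : NeZero (t ^ 2 + 1) := ⟨by omega⟩
  have hp2 : t ^ 2 = t * t := by ring
  have hm0 : (t : ZMod (t ^ 2 + 1)) ^ 2 + 1 = 0 := by
    have h := ZMod.natCast_self (t ^ 2 + 1); push_cast at h; exact h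
  set vD : ZMod (t ^ 2 + 1) :=
    c1 - (1 + (t : ZMod (t ^ 2 + 1))) * M t + (t : ZMod (t ^ 2 + 1)) * M (2 * t) with hvD
  set vB : ZMod (t ^ 2 + 1) :=
    c1 - (1 + (t : ZMod (t ^ 2 + 1))) * M (t + 1) + (t : ZMod (t ^ 2 + 1)) * M (2 * t) with hvB
  set vC : ZMod (t ^ 2 + 1) :=
    c1 - (1 + (t : ZMod (t ^ 2 + 1))) * M t + (t : ZMod (t ^ 2 + 1)) * M (2 * t + 1) with hvC
  have hrD : ((vD.val : ℕ) : ZMod (t ^ 2 + 1)) = vD := val_coe vD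
  have hrDlt : vD.val < t ^ 2 + 1 := ZMod.val_lt vD
  set rD := vD.val with hrDdef
  rcases lt_trichotomy rD t with hcase | hcase | hcase
  · -- Config D, small residue
    obtain ⟨z, hz1, hz⟩ := pick_z c2 rD
    refine ⟨t, 2 * t, rD, 0, z, by omega, by omega, by omega, by omega, by omega, by omega,
      by omega, ?_, ?_⟩
    · rw [← hvD]; push_cast; linear_combination hrD
    · push_cast; push_cast at hz; linear_combination hz
  · -- rD = t : look at vB
    have hrB : ((vB.val : ℕ) : ZMod (t ^ 2 + 1)) = vB := val_coe vB
    have hrBlt : vB.val < t ^ 2 + 1 := ZMod.val_lt vB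
    set rB := vB.val with hrBdef
    by_cases hB1 : rB ≤ t
    · -- Config B, small residue
      obtain ⟨z, hz1, hz⟩ := pick_z c2 rB
      refine ⟨t + 1, 2 * t, rB, 0, z, by omega, by omega, by omega, by omega, by omega,
        by omega, by omega, ?_, ?_⟩
      · rw [← hvB]; push_cast; linear_combination hrB
      · push_cast; push_cast at hz; linear_combination hz
    · by_cases hB2 : 2 * t + 1 ≤ rB
      · -- Config B, big residue
        obtain ⟨x, y, hx, hy1, heq, hbd⟩ := rep_big t rB ht (by omega) (by omega)
        have hmul : t * (t - 1) + t = t * t := by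
          have h5 : t - 1 + 1 = t := by omega
          calc t * (t - 1) + t = t * ((t - 1) + 1) := by ring
            _ = t * t := by rw [h5]
        have hylt : t * y < t * (t - 1) := by omega
        have hy2 : y < t - 1 := Nat.lt_of_mul_lt_mul_left hylt
        obtain ⟨z, hz1, hz⟩ := pick_z c2 (x + y)
        have hc := congrArg (fun u : ℕ => (u : ZMod (t ^ 2 + 1))) heq
        push_cast at hc
        refine ⟨t + 1, 2 * t, x, y, z, by omega, by omega, by omega, by omega, by omega,
          by omega, by omega, ?_, ?_⟩
        · rw [← hvB]; linear_combination hc - hm0 + hrB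
        · push_cast; push_cast at hz; linear_combination hz
      · -- Case 3 : rD = t, t + 1 ≤ rB ≤ 2t
        obtain ⟨j, hj⟩ : ∃ j, rB = t + j := ⟨rB - t, by omega⟩
        have hj1 : 1 ≤ j := by omega
        have hj2 : j ≤ t := by omega
        have hrC : ((vC.val : ℕ) : ZMod (t ^ 2 + 1)) = vC := val_coe vC
        have hrClt : vC.val < t ^ 2 + 1 := ZMod.val_lt vC
        set rC := vC.val with hrCdef
        -- relation : c1 - (1+t) M (t+1) + t M (2t+1)  = vC + j
        have hAC : c1 - (1 + (t : ZMod (t ^ 2 + 1))) * M (t + 1)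
            + (t : ZMod (t ^ 2 + 1)) * M (2 * t + 1) = vC + (j : ZMod (t ^ 2 + 1)) := by
          have h6 : ((t + j : ℕ) : ZMod (t ^ 2 + 1)) = vB := by rw [← hj]; exact hrB
          have h7 : ((t : ℕ) : ZMod (t ^ 2 + 1)) = vD := by
            have h7' := hrD; rw [hcase] at h7'; exact h7'
          rw [hvB] at h6; rw [hvD] at h7; rw [hvC]
          push_cast at h6 h7
          linear_combination h7 - h6
        by_cases h3a : 1 ≤ rC ∧ rC ≤ t - 1
        · -- two representations (rC, 0) and (rC - 1, t)
          obtain ⟨u, hu⟩ : ∃ u, rC = u + 1 := ⟨rC - 1, by omega⟩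
          by_cases hb : c2 - ((rC : ℕ) : ZMod n) = ((n - 1 : ℕ) : ZMod n)
          · -- use (u, t)
            have hne : c2 - ((u + t : ℕ) : ZMod n) ≠ ((n - 1 : ℕ) : ZMod n) := by
              intro h8
              have h9 : ((u + t : ℕ) : ZMod n) = ((rC : ℕ) : ZMod n) := by
                linear_combination hb - h8
              rw [hu] at h9
              push_cast at h9
              have h10 : ((t - 1 : ℕ) : ZMod n) = 0 := by
                rw [Nat.cast_sub (show 1 ≤ t by omega)]
                push_cast
                linear_combination h9
              have h11 : n ∣ t - 1 := (CharP.cast_eq_zero_iff (ZMod n) n (t - 1)).mp h10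
              have h12 := Nat.le_of_dvd (by omega) h11
              omega
            obtain ⟨z, hz1, hz⟩ := pick_z2 c2 (u + t) hne
            have heq : u + (t ^ 2 + 1) = t * t + rC := by omega
            have hc := congrArg (fun u : ℕ => (u : ZMod (t ^ 2 + 1))) heq
            push_cast at hc
            refine ⟨t, 2 * t + 1, u, t, z, by omega, by omega, by omega, by omega, by omega,
              by omega, by omega, ?_, ?_⟩
            · rw [← hvC]; linear_combination hc - hm0 + hrC
            · push_cast; push_cast at hz; linear_combination hz
          · -- use (rC, 0)
            obtain ⟨z, hz1, hz⟩ := pick_z2 c2 rC hb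
            refine ⟨t, 2 * t + 1, rC, 0, z, by omega, by omega, by omega, by omega, by omega,
              by omega, by omega, ?_, ?_⟩
            · rw [← hvC]; push_cast; linear_combination hrC
            · push_cast; push_cast at hz; linear_combination hz
        · -- unique representation case
          obtain ⟨xC, kC, hxC, hkC, hk0, hkt, heqC⟩ :
              ∃ xC kC : ℕ, xC + 1 ≤ t ∧ kC ≤ t ∧ (kC = 0 → xC = 0) ∧ (kC = t → xC + 1 = t) ∧
                ((xC : ZMod (t ^ 2 + 1)) - (t : ZMod (t ^ 2 + 1)) * (kC : ZMod (t ^ 2 + 1))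
                  = vC) := by
            rcases (show rC = 0 ∨ t ≤ rC by omega) with h0 | hge
            · refine ⟨0, 0, by omega, by omega, fun _ => rfl, fun h => absurd h (by omega), ?_⟩
              rw [h0] at hrC
              push_cast
              push_cast at hrC
              linear_combination hrC
            · obtain ⟨xC, kC, hx, hk1, heq, hbd⟩ := rep_big t rC ht (by omega) (by omega)
              have hkle : kC ≤ t := by
                have h13 : t * kC ≤ t * t := by omega
                exact Nat.le_of_mul_le_mul_left h13 (by omega)
              have hc := congrArg (fun u : ℕ => (u : ZMod (t ^ 2 + 1))) heq
              push_cast at hc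
              refine ⟨xC, kC, hx, hkle, fun h => by omega, fun h => ?_, ?_⟩
              · rw [h] at heq; omega
              · linear_combination hc - hm0 + hrC
          by_cases hb : c2 - ((xC + kC : ℕ) : ZMod n) = ((n - 1 : ℕ) : ZMod n)
          · -- config A
            obtain ⟨xA, yA, hxA, hyA, heqA, hσ⟩ := buildA t ht j xC kC hj1 hj2 hxC hkC hk0 hkt
            have hne : c2 - ((xA + yA : ℕ) : ZMod n) ≠ ((n - 1 : ℕ) : ZMod n) := by
              intro h8
              have h9 : ((xA + yA : ℕ) : ZMod n) = ((xC + kC : ℕ) : ZMod n) := by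
                linear_combination hb - h8
              rcases hσ with hσ | hσ
              · have h14 := congrArg (fun u : ℕ => (u : ZMod n)) hσ
                push_cast at h14 h9
                have h10 : ((t + 1 - j : ℕ) : ZMod n) = 0 := by
                  rw [Nat.cast_sub (show j ≤ t + 1 by omega)]
                  push_cast
                  linear_combination h14 - h9
                have h11 : n ∣ t + 1 - j := (CharP.cast_eq_zero_iff (ZMod n) n _).mp h10
                have h12 := Nat.le_of_dvd (by omega) h11
                omega
              · have h14 := congrArg (fun u : ℕ => (u : ZMod n)) hσ
                push_cast at h14 h9
                have h10 : ((j : ℕ) : ZMod n) = 0 := by linear_combination h9 - h14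
                have h11 : n ∣ j := (CharP.cast_eq_zero_iff (ZMod n) n _).mp h10
                have h12 := Nat.le_of_dvd (by omega) h11
                omega
            obtain ⟨z, hz1, hz⟩ := pick_z2 c2 (xA + yA) hne
            refine ⟨t + 1, 2 * t + 1, xA, yA, z, by omega, by omega, by omega, by omega,
              by omega, by omega, by omega, ?_, ?_⟩
            · rw [hAC]; linear_combination heqA + heqC
            · push_cast; push_cast at hz; linear_combination hz
          · -- config C
            obtain ⟨z, hz1, hz⟩ := pick_z2 c2 (xC + kC) hb
            refine ⟨t, 2 * t + 1, xC, kC, z, by omega, by omega, by omega, by omega,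
              by omega, by omega, by omega, ?_, ?_⟩
            · rw [← hvC]; linear_combination heqC
            · push_cast; push_cast at hz; linear_combination hz
  · -- Config D, big residue
    obtain ⟨x, y, hx, hy1, heq, hbd⟩ := rep_big t rD ht (by omega) (by omega)
    have hylt : t * y < t * t := by omega
    have hy2 : y < t := Nat.lt_of_mul_lt_mul_left hylt
    obtain ⟨z, hz1, hz⟩ := pick_z c2 (x + y)
    have hc := congrArg (fun u : ℕ => (u : ZMod (t ^ 2 + 1))) heq
    push_cast at hc
    refine ⟨t, 2 * t, x, y, z, by omega, by omega, by omega, by omega, by omega,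
      by omega, by omega, ?_, ?_⟩
    · rw [← hvD]; linear_combination hc - hm0 + hrD
    · push_cast; push_cast at hz; linear_combination hz




/-- A simple `Q_ℓ`-coloring `χ : ℕ^{ℓ+1} → C` is `d`-polychromatic if for every
embedded `Q_d`, encoded by region counts `a_0, …, a_d` (given by `a : ℕ → ℕ`; only
the first `d+1` values are used), and every color `c`, some `Q_ℓ`-subface receives
color `c`.  A subface is given by selected star positions `0 < s 1 < ⋯ < s ℓ < d+1`
(with conventions `s 0 = 0`, `s (ℓ+1) = d+1`) and bits `ε k ∈ {0,1}` for the
unselected stars; its tuple is `p j = ∑_{s j ≤ i < s (j+1)} a i + ∑_{s j < k < s (j+1)} ε k`. -/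
def PolyColoring (ℓ d : ℕ) {C : Type*} (χ : (Fin (ℓ + 1) → ℕ) → C) : Prop :=
  ∀ a : ℕ → ℕ, ∀ c : C, ∃ s : ℕ → ℕ, ∃ ε : ℕ → ℕ,
    s 0 = 0 ∧ s (ℓ + 1) = d + 1 ∧ (∀ j, j ≤ ℓ → s j < s (j + 1)) ∧ (∀ k, ε k ≤ 1) ∧
    χ (fun j => (∑ i ∈ Finset.Ico (s j.1) (s (j.1 + 1)), a i) +
                (∑ k ∈ Finset.Ioo (s j.1) (s (j.1 + 1)), ε k)) = c

theorem statement4 (t n : ℕ) (ht : 2 ≤ t) (hn : t < n) :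
    Function.Surjective
      (fun v : Fin 3 → ℕ =>
        ((v 0 - t * v 1, v 0 + v 1 + v 2) : ZMod (t ^ 2 + 1) × ZMod n)) ∧
    PolyColoring 2 (2 * t + n - 1)
      (fun v : Fin 3 → ℕ =>
        ((v 0 - t * v 1, v 0 + v 1 + v 2) : ZMod (t ^ 2 + 1) × ZMod n)) := by
  haveI : NeZero n := ⟨by omega⟩
  haveI : NeZero (t ^ 2 + 1) := ⟨by omega⟩
  constructor
  · rintro ⟨c1, c2⟩
    refine ⟨fun i => if i.1 = 0 then c1.val else if i.1 = 1 then 0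
      else (c2 - ((c1.val : ℕ) : ZMod n)).val, ?_⟩
    norm_num
  · intro a c
    obtain ⟨c1, c2⟩ := c
    obtain ⟨s1, s2, x, y, z, hs1l, hs1u, hs2l, hs2u, hxb, hyb, hzb, hfst, hsnd⟩ :=
      core_s4 t n ht hn (fun s => ((∑ i ∈ Finset.range s, a i : ℕ) : ZMod (t ^ 2 + 1))) c1
        (c2 - ((∑ i ∈ Finset.range (2 * t + n), a i : ℕ) : ZMod n))
    refine ⟨fun k => if k = 0 then 0 else if k = 1 then s1 else if k = 2 then s2
      else 2 * t + n - 1 + 1,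
      fun k => if (1 ≤ k ∧ k ≤ x) ∨ (s1 + 1 ≤ k ∧ k ≤ s1 + y) ∨ (s2 + 1 ≤ k ∧ k ≤ s2 + z)
        then 1 else 0, rfl, rfl, ?_, ?_, ?_⟩
    · intro j hj
      interval_cases j <;> norm_num <;> omega
    · intro k
      dsimp only
      split <;> omega
    · dsimp only
      simp only [show ((0 : Fin (2+1)) : ℕ) = 0 from rfl, show ((1 : Fin (2+1)) : ℕ) = 1 from rfl,
        show ((2 : Fin (2+1)) : ℕ) = 2 from rfl]
      norm_num
      have hco : 2 * t + n - 1 + 1 = 2 * t + n := by omega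
      rw [hco]
      rw [card_indicator _ 0 s1 x (by omega) (by intro k h1 h2; omega),
        card_indicator _ s1 s2 y (by omega) (by intro k h1 h2; omega),
        card_indicator _ s2 (2 * t + n) z (by omega) (by intro k h1 h2; omega)]
      push_cast at hfst hsnd
      constructor
      · have hj : (∑ i ∈ Finset.range s1, (a i : ZMod (t ^ 2 + 1)))
            + (∑ i ∈ Finset.Ico s1 s2, (a i : ZMod (t ^ 2 + 1)))
            = ∑ i ∈ Finset.range s2, (a i : ZMod (t ^ 2 + 1)) := by
          simp only [Finset.range_eq_Ico]
          exact Finset.sum_Ico_consecutive _ (Nat.zero_le _) (by omega)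
        linear_combination hfst - (t : ZMod (t ^ 2 + 1)) * hj
      · have hj1 : (∑ i ∈ Finset.range s1, (a i : ZMod n))
            + (∑ i ∈ Finset.Ico s1 s2, (a i : ZMod n))
            = ∑ i ∈ Finset.range s2, (a i : ZMod n) := by
          simp only [Finset.range_eq_Ico]
          exact Finset.sum_Ico_consecutive _ (Nat.zero_le _) (by omega)
        have hj2 : (∑ i ∈ Finset.range s2, (a i : ZMod n))
            + (∑ i ∈ Finset.Ico s2 (2 * t + n), (a i : ZMod n))
            = ∑ i ∈ Finset.range (2 * t + n), (a i : ZMod n) := by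
          simp only [Finset.range_eq_Ico]
          exact Finset.sum_Ico_consecutive _ (by omega) (by omega)
        linear_combination hsnd + hj1 + hj2
end

section
/- Let t ≥ 2 and n > t be integers and set m = t²+1. Then for every integer h and every integer δ with 1 ≤ δ ≤ t, there exist integers u₁, v₁, u₂, v₂ with 0 ≤ u₁ ≤ t−1, 0 ≤ v₁ ≤ t, 0 ≤ u₂ ≤ t, 0 ≤ v₂ ≤ t−1, such that u₁ − t·v₁ ≡ h (mod m), u₂ − t·v₂ ≡ h + δ (mod m), and u₁ + v₁ ≢ u₂ + v₂ (mod n). -/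
theorem statement6 (t n : ℤ) (ht : 2 ≤ t) (hn : t < n) (h δ : ℤ)
    (hδ1 : 1 ≤ δ) (hδt : δ ≤ t) :
    ∃ u₁ v₁ u₂ v₂ : ℤ,
      0 ≤ u₁ ∧ u₁ ≤ t - 1 ∧ 0 ≤ v₁ ∧ v₁ ≤ t ∧
      0 ≤ u₂ ∧ u₂ ≤ t ∧ 0 ≤ v₂ ∧ v₂ ≤ t - 1 ∧
      u₁ - t * v₁ ≡ h [ZMOD (t ^ 2 + 1)] ∧
      u₂ - t * v₂ ≡ h + δ [ZMOD (t ^ 2 + 1)] ∧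
      ¬(u₁ + v₁ ≡ u₂ + v₂ [ZMOD n]) := by
  have hm : (0:ℤ) < t ^ 2 + 1 := by positivity
  set m : ℤ := t ^ 2 + 1 with hmdef
  set r : ℤ := (h + δ) % m with hrdef
  have hr0 : 0 ≤ r := Int.emod_nonneg _ (by positivity)
  have hrm : r < m := Int.emod_lt_of_pos _ hm
  have hrcong : r ≡ h + δ [ZMOD m] := Int.mod_modEq _ _
  obtain ⟨u₂, v₂, hu₂0, hu₂t, hv₂0, hv₂t, hcong2⟩ :
      ∃ u₂ v₂ : ℤ, 0 ≤ u₂ ∧ u₂ ≤ t ∧ 0 ≤ v₂ ∧ v₂ ≤ t - 1 ∧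
        u₂ - t * v₂ ≡ h + δ [ZMOD m] := by
    by_cases hc : r ≤ t
    · exact ⟨r, 0, hr0, hc, le_refl 0, by linarith, by simpa using hrcong⟩
    · push_neg at hc
      set u : ℤ := (r - 1) % t with hudef
      have hu0 : 0 ≤ u := Int.emod_nonneg _ (by linarith)
      have hut : u < t := Int.emod_lt_of_pos _ (by linarith)
      obtain ⟨k, hk⟩ : t ∣ (r - 1 - u) := Int.dvd_self_sub_of_emod_eq rfl
      have hk1 : 1 ≤ k := by nlinarith [hk, hmdef]
      have hkt : k ≤ t - 1 := by nlinarith [hk, hmdef]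
      refine ⟨u, t - k, hu0, by linarith, by linarith, by linarith, ?_⟩
      have heq : u - t * (t - k) = r - m := by
        have hm' : m = t ^ 2 + 1 := hmdef
        linear_combination -hk + hm'
      rw [heq]
      exact (Int.modEq_iff_dvd.mpr ⟨1, by ring⟩).trans hrcong
  have hsub : u₂ - t * v₂ - δ ≡ h [ZMOD m] := by
    have := hcong2.sub_right δ
    rwa [add_sub_cancel_right] at this
  by_cases hcase : δ ≤ u₂
  · refine ⟨u₂ - δ, v₂, u₂, v₂, by linarith, by linarith, hv₂0, by linarith,
      hu₂0, hu₂t, hv₂0, hv₂t, ?_, hcong2, ?_⟩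
    · rw [show u₂ - δ - t * v₂ = u₂ - t * v₂ - δ by ring]
      exact hsub
    · intro hcon
      have hd : n ∣ δ := by
        have := hcon.dvd
        rwa [show u₂ + v₂ - (u₂ - δ + v₂) = δ by ring] at this
      have := Int.le_of_dvd (by linarith) hd
      linarith
  · push_neg at hcase
    refine ⟨u₂ - δ + t, v₂ + 1, u₂, v₂, by linarith, by linarith, by linarith, by linarith,
      hu₂0, hu₂t, hv₂0, hv₂t, ?_, hcong2, ?_⟩
    · rw [show u₂ - δ + t - t * (v₂ + 1) = u₂ - t * v₂ - δ by ring]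
      exact hsub
    · intro hcon
      have hd : n ∣ δ - t - 1 := by
        have := hcon.dvd
        rwa [show u₂ + v₂ - (u₂ - δ + t + (v₂ + 1)) = δ - t - 1 by ring] at this
      have hd' : n ∣ t + 1 - δ := by
        have := hd.neg_right
        rwa [show -(δ - t - 1) = t + 1 - δ by ring] at this
      have := Int.le_of_dvd (by linarith) hd'
      linarith
end

section
/- Let t ≥ 2 be an integer and set m = t²+1. Then the set of residues { (u − t·v) mod m : u, v ∈ ℤ, 0 ≤ u ≤ t−1, 0 ≤ v ≤ t−1 } is exactly the complement in ZMod m of the single residue t mod m; that is, it consists of all residues of ZMod m except t. -/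
theorem statement7 (t : ℕ) (ht : 2 ≤ t) :
    {x : ZMod (t ^ 2 + 1) | ∃ u v : ℤ,
        0 ≤ u ∧ u ≤ (t : ℤ) - 1 ∧ 0 ≤ v ∧ v ≤ (t : ℤ) - 1 ∧
        x = ((u - t * v : ℤ) : ZMod (t ^ 2 + 1))} =
      {(t : ZMod (t ^ 2 + 1))}ᶜ := by
  have ht2 : ((t : ℤ)) ^ 2 = (t : ℤ) * t := sq (t : ℤ)
  have hne : NeZero (t ^ 2 + 1) := ⟨by omega⟩
  ext x
  simp only [Set.mem_setOf_eq, Set.mem_compl_iff, Set.mem_singleton_iff]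
  constructor
  · rintro ⟨u, v, hu0, hu1, hv0, hv1, rfl⟩
    intro h
    rw [show ((t : ZMod (t ^ 2 + 1))) = (((t : ℤ)) : ZMod (t ^ 2 + 1)) by push_cast; ring,
      ZMod.intCast_eq_intCast_iff] at h
    have hd : ((t ^ 2 + 1 : ℕ) : ℤ) ∣ ((t : ℤ) - (u - t * v)) := h.dvd
    have htv : (t : ℤ) * v ≤ t * (t - 1) := by
      have := mul_le_mul_of_nonneg_left hv1 (by positivity : (0:ℤ) ≤ t)
      linarith
    have hpos : 0 < (t : ℤ) - (u - t * v) := by nlinarith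
    have hle := Int.le_of_dvd hpos hd
    push_cast at hle
    nlinarith
  · intro hx
    set n := x.val with hn
    have hnlt : n < t ^ 2 + 1 := x.val_lt
    have hxn : ((n : ℕ) : ZMod (t ^ 2 + 1)) = x := ZMod.natCast_rightInverse x
    have hnt : n ≠ t := by
      intro h
      apply hx
      rw [← hxn, h]
    rcases lt_or_gt_of_ne hnt with hlt | hgt
    · refine ⟨(n : ℤ), 0, by positivity, by omega, le_refl 0, by omega, ?_⟩
      rw [← hxn]
      push_cast
      ring
    · -- n > t, so set N = t^2+1-n, write N-1 = t*q + r
      set N : ℕ := t ^ 2 + 1 - n with hN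
      have hN1 : 1 ≤ N := by omega
      set q : ℕ := (N - 1) / t with hq
      set r : ℕ := (N - 1) % t with hrdef
      have hdm : t * q + r = N - 1 := Nat.div_add_mod (N - 1) t
      have hr : r < t := Nat.mod_lt _ (by omega)
      have hNle : N ≤ t ^ 2 - t := by omega
      have hsum : (N : ℤ) + n = (t : ℤ) ^ 2 + 1 := by
        have h0 : N + n = t ^ 2 + 1 := by omega
        have h0' := congrArg (Nat.cast : ℕ → ℤ) h0
        push_cast at h0'
        linarith
      have hqle : (q : ℤ) ≤ (t : ℤ) - 2 := by
        by_contra hcon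
        push_neg at hcon
        have h1 : (t : ℤ) - 1 ≤ q := by linarith
        have h2 : (t : ℤ) * ((t : ℤ) - 1) ≤ t * q :=
          mul_le_mul_of_nonneg_left h1 (by positivity)
        have h3 : (t : ℤ) * q + r = (N : ℤ) - 1 := by exact_mod_cast hdm
        have h4 : (N : ℤ) ≤ (t : ℤ) ^ 2 - t := by
          have hnt' : (t : ℤ) < n := by exact_mod_cast hgt
          linarith
        nlinarith
      have hr' : (r : ℤ) < t := by exact_mod_cast hr
      have hr0 : (0:ℤ) ≤ r := Int.natCast_nonneg r
      refine ⟨(t : ℤ) - 1 - r, (q : ℤ) + 1, by linarith, by linarith, by positivity, by linarith, ?_⟩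
      rw [← hxn]
      have key : (t : ℤ) - 1 - r - t * ((q : ℤ) + 1) = (n : ℤ) - ((t : ℤ) ^ 2 + 1) := by
        have h3 : (t : ℤ) * q + r = (N : ℤ) - 1 := by exact_mod_cast hdm
        linarith
      rw [key]
      have hz : ((t : ZMod (t ^ 2 + 1))) ^ 2 + 1 = 0 := by
        have hz0 := ZMod.natCast_self (t ^ 2 + 1)
        push_cast at hz0
        linear_combination hz0
      push_cast
      linear_combination hz
end

section
/- Let t ≥ 2 be an integer and set m = t²+1. Then the set of residues { (u − t·v) mod m : u, v ∈ ℤ, 0 ≤ u ≤ t, 0 ≤ v ≤ t−2 } is exactly the complement in ZMod m of the set { (t+1) mod m, (t+2) mod m, ..., (2t) mod m }; that is, it consists of all residues of ZMod m except the t residues t+1, t+2, ..., 2t. -/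
theorem statement8 (t : ℕ) (ht : 2 ≤ t) :
    {x : ZMod (t ^ 2 + 1) | ∃ u v : ℤ,
        0 ≤ u ∧ u ≤ (t : ℤ) ∧ 0 ≤ v ∧ v ≤ (t : ℤ) - 2 ∧
        x = ((u - t * v : ℤ) : ZMod (t ^ 2 + 1))} =
      {x : ZMod (t ^ 2 + 1) | ∃ j : ℤ,
        (t : ℤ) + 1 ≤ j ∧ j ≤ 2 * t ∧ x = ((j : ℤ) : ZMod (t ^ 2 + 1))}ᶜ := by
  haveI : NeZero (t ^ 2 + 1) := ⟨Nat.succ_ne_zero _⟩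
  have ht' : (2 : ℤ) ≤ (t : ℤ) := by exact_mod_cast ht
  have htpos : (0 : ℤ) < (t : ℤ) := by linarith
  ext x
  simp only [Set.mem_setOf_eq, Set.mem_compl_iff]
  constructor
  · rintro ⟨u, v, hu0, hut, hv0, hvt, rfl⟩ ⟨j, hj1, hj2, hxj⟩
    have hmod := (ZMod.intCast_eq_intCast_iff' (u - t * v) j (t ^ 2 + 1)).mp hxj
    have hdvd : ((t : ℤ) ^ 2 + 1) ∣ (j - (u - t * v)) := by
      have := Int.ModEq.dvd hmod
      push_cast at this
      exact this
    have hlt : j - (u - t * v) < (t : ℤ) ^ 2 + 1 := by nlinarith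
    have hpos : 0 < j - (u - t * v) := by nlinarith
    have := Int.le_of_dvd hpos hdvd
    linarith
  · intro h
    set m : ℤ := (t : ℤ) ^ 2 + 1 with hm
    have hn0 : (0 : ℤ) ≤ (x.val : ℤ) := Int.natCast_nonneg _
    have hnlt : (x.val : ℤ) < m := by
      rw [hm]
      exact_mod_cast ZMod.val_lt x
    have hx : (((x.val : ℤ)) : ZMod (t ^ 2 + 1)) = x := by
      push_cast
      simp [ZMod.natCast_val, ZMod.cast_id]
    set n : ℤ := (x.val : ℤ) with hne
    by_cases h1 : n ≤ (t : ℤ)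
    · exact ⟨n, 0, hn0, h1, le_refl 0, by linarith, by simpa using hx.symm⟩
    · push_neg at h1
      by_cases h2 : n ≤ 2 * t
      · exact absurd ⟨n, by linarith, h2, hx.symm⟩ h
      · push_neg at h2
        set w : ℤ := n - m with hw
        have hw1 : -((t : ℤ) * ((t : ℤ) - 2)) ≤ w := by
          simp only [hw, hm]; nlinarith
        have hw2 : w ≤ -1 := by simp only [hw, hm]; linarith
        set q : ℤ := w / t with hq
        set r : ℤ := w % t with hr
        have hqr : (t : ℤ) * q + r = w := Int.mul_ediv_add_emod w t
        have hr0 : 0 ≤ r := Int.emod_nonneg w (by linarith)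
        have hrt : r < (t : ℤ) := Int.emod_lt_of_pos w htpos
        have hq1 : -((t : ℤ) - 2) ≤ q := by
          rw [hq]
          rw [Int.le_ediv_iff_mul_le htpos]
          nlinarith
        have hq2 : q ≤ 0 := by nlinarith
        refine ⟨r, -q, hr0, by linarith, by linarith, by linarith, ?_⟩
        have : r - (t : ℤ) * (-q) = n - m := by linarith
        rw [this]
        have hmz : ((m : ℤ) : ZMod (t ^ 2 + 1)) = 0 := by
          have hmm : (m : ℤ) = ((t ^ 2 + 1 : ℕ) : ℤ) := by rw [hm]; push_cast; ring
          rw [hmm, Int.cast_natCast, ZMod.natCast_self]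
        rw [Int.cast_sub, hmz, sub_zero, hx]
end

section
/- Let t ≥ 2 be an integer and set m = t²+1. Then both of the following sets equal all of ZMod m: (i) { (u − t·v) mod m : u, v ∈ ℤ, 0 ≤ u ≤ t−1, 0 ≤ v ≤ t }, and (ii) { (u − t·v) mod m : u, v ∈ ℤ, 0 ≤ u ≤ t, 0 ≤ v ≤ t−1 }. -/
lemma key_aux (t : ℕ) (x : ZMod (t ^ 2 + 1)) (u v : ℤ)
    (h : ((t * u + v : ℤ) : ZMod (t ^ 2 + 1)) = (t : ZMod (t ^ 2 + 1)) * x) :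
    x = ((u - t * v : ℤ) : ZMod (t ^ 2 + 1)) := by
  have hsq : ((t : ZMod (t ^ 2 + 1)))^2 = -1 := by
    have h0 : ((t ^ 2 + 1 : ℕ) : ZMod (t ^ 2 + 1)) = 0 := ZMod.natCast_self _
    push_cast at h0
    linear_combination h0
  push_cast at h ⊢
  linear_combination (t : ZMod (t ^ 2 + 1)) * h + (x - (u : ZMod (t ^ 2 + 1))) * hsq

theorem statement9 (t : ℕ) (ht : 2 ≤ t) :
    {x : ZMod (t ^ 2 + 1) | ∃ u v : ℤ,
        0 ≤ u ∧ u ≤ (t : ℤ) - 1 ∧ 0 ≤ v ∧ v ≤ (t : ℤ) ∧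
        x = ((u - t * v : ℤ) : ZMod (t ^ 2 + 1))} = Set.univ ∧
    {x : ZMod (t ^ 2 + 1) | ∃ u v : ℤ,
        0 ≤ u ∧ u ≤ (t : ℤ) ∧ 0 ≤ v ∧ v ≤ (t : ℤ) - 1 ∧
        x = ((u - t * v : ℤ) : ZMod (t ^ 2 + 1))} = Set.univ := by
  have ht0 : 0 < t := by omega
  haveI : NeZero (t ^ 2 + 1) := ⟨by positivity⟩
  have htt : t ^ 2 = t * t := sq t
  constructor
  · ext x
    simp only [Set.mem_setOf_eq, Set.mem_univ, iff_true]
    set n := ((t : ZMod (t ^ 2 + 1)) * x).val with hn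
    have hnlt : n < t ^ 2 + 1 := ZMod.val_lt _
    have hcast : ((n : ℕ) : ZMod (t ^ 2 + 1)) = (t : ZMod (t ^ 2 + 1)) * x :=
      ZMod.natCast_rightInverse _
    by_cases hc : n = t ^ 2
    · refine ⟨(t : ℤ) - 1, (t : ℤ), by omega, le_refl _, by positivity, le_refl _,
        key_aux t x _ _ ?_⟩
      have hint : ((t : ℤ) * ((t : ℤ) - 1) + (t : ℤ)) = (n : ℤ) := by
        have : (t : ℤ) * (t : ℤ) = (n : ℤ) := by
          rw [hc]; push_cast; ring
        linarith
      rw [hint]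
      exact_mod_cast hcast
    · have hle : n ≤ t ^ 2 - 1 := by omega
      have hdiv : n / t ≤ t - 1 := by
        have e : t ^ 2 - 1 = t * (t - 1) + (t - 1) := by
          zify [show 1 ≤ t ^ 2 by nlinarith, show 1 ≤ t by omega]
          push_cast [Nat.cast_sub (show 1 ≤ t by omega)]
          ring
        calc n / t ≤ (t ^ 2 - 1) / t := Nat.div_le_div_right hle
          _ = (t - 1) + (t - 1) / t := by rw [e, Nat.mul_add_div ht0]
          _ = t - 1 := by rw [Nat.div_eq_of_lt (by omega), Nat.add_zero]
      have hmod : n % t < t := Nat.mod_lt n ht0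
      refine ⟨((n / t : ℕ) : ℤ), ((n % t : ℕ) : ℤ), Int.natCast_nonneg _, by omega,
        Int.natCast_nonneg _, by omega, key_aux t x _ _ ?_⟩
      have hint : ((t : ℤ) * ((n / t : ℕ) : ℤ) + ((n % t : ℕ) : ℤ)) = (n : ℤ) := by
        exact_mod_cast congrArg (Nat.cast : ℕ → ℤ) (Nat.div_add_mod n t)
      rw [hint]
      exact_mod_cast hcast
  · ext x
    simp only [Set.mem_setOf_eq, Set.mem_univ, iff_true]
    set n := ((t : ZMod (t ^ 2 + 1)) * x).val with hn
    have hnlt : n < t ^ 2 + 1 := ZMod.val_lt _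
    have hcast : ((n : ℕ) : ZMod (t ^ 2 + 1)) = (t : ZMod (t ^ 2 + 1)) * x :=
      ZMod.natCast_rightInverse _
    have hdiv : n / t ≤ t := by
      calc n / t ≤ t ^ 2 / t := Nat.div_le_div_right (by omega)
        _ = t := by rw [htt, Nat.mul_div_cancel_left _ ht0]
    have hmod : n % t < t := Nat.mod_lt n ht0
    refine ⟨((n / t : ℕ) : ℤ), ((n % t : ℕ) : ℤ), Int.natCast_nonneg _, by omega,
      Int.natCast_nonneg _, by omega, key_aux t x _ _ ?_⟩
    have hint : ((t : ℤ) * ((n / t : ℕ) : ℤ) + ((n % t : ℕ) : ℤ)) = (n : ℤ) := by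
      exact_mod_cast congrArg (Nat.cast : ℕ → ℤ) (Nat.div_add_mod n t)
    rw [hint]
    exact_mod_cast hcast
end

section
/- Let ℓ₀, ℓ₁ ≥ 0 and d₀ ≥ ℓ₀, d₁ ≥ ℓ₁. Suppose χ₀ : ℕ^{ℓ₀+1} → C₀ is a d₀-polychromatic simple Q_{ℓ₀}-coloring and χ₁ : ℕ^{ℓ₁+1} → C₁ is a d₁-polychromatic simple Q_{ℓ₁}-coloring. Then the coloring χ : ℕ^{ℓ₀+ℓ₁+2} → C₀ × C₁ defined by applying χ₀ to the first ℓ₀+1 coordinates and χ₁ to the last ℓ₁+1 coordinates is a (d₀+d₁+1)-polychromatic simple Q_{ℓ₀+ℓ₁+1}-coloring. -/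
lemma mono_aux (f : ℕ → ℕ) (ℓ : ℕ) (h : ∀ j ≤ ℓ, f j < f (j + 1)) :
    ∀ m n, m ≤ n → n ≤ ℓ + 1 → f m ≤ f n := by
  intro m n hmn hn
  induction n with
  | zero => simp [Nat.le_zero.mp hmn]
  | succ n ih =>
    rcases Nat.eq_or_lt_of_le hmn with h' | h'
    · simp [h']
    · exact le_trans (ih (by omega) (by omega)) (le_of_lt (h n (by omega)))

/-- Combining a `d₀`-polychromatic simple `Q_{ℓ₀}`-coloring on the first `ℓ₀ + 1`
coordinates with a `d₁`-polychromatic simple `Q_{ℓ₁}`-coloring on the last `ℓ₁ + 1`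
coordinates yields a `(d₀ + d₁ + 1)`-polychromatic simple `Q_{ℓ₀ + ℓ₁ + 1}`-coloring. -/
theorem statement12 (ℓ₀ ℓ₁ d₀ d₁ : ℕ) (h₀ : ℓ₀ ≤ d₀) (h₁ : ℓ₁ ≤ d₁)
    {C₀ C₁ : Type*} (χ₀ : (Fin (ℓ₀ + 1) → ℕ) → C₀) (χ₁ : (Fin (ℓ₁ + 1) → ℕ) → C₁)
    (hχ₀ : PolyColoring ℓ₀ d₀ χ₀) (hχ₁ : PolyColoring ℓ₁ d₁ χ₁) :
    PolyColoring (ℓ₀ + ℓ₁ + 1) (d₀ + d₁ + 1)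
      (fun v : Fin (ℓ₀ + ℓ₁ + 1 + 1) → ℕ =>
        (χ₀ (fun j => v ⟨j.1, by have := j.2; omega⟩),
         χ₁ (fun j => v ⟨ℓ₀ + 1 + j.1, by have := j.2; omega⟩))) := by
  intro a c
  obtain ⟨s0, e0, hs00, hs0t, hs0m, he0, hc0⟩ := hχ₀ a c.1
  obtain ⟨s1, e1, hs10, hs1t, hs1m, he1, hc1⟩ := hχ₁ (fun i => a (d₀ + 1 + i)) c.2
  refine ⟨fun j => if j ≤ ℓ₀ then s0 j else d₀ + 1 + s1 (j - (ℓ₀ + 1)),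
          fun k => if k ≤ d₀ then e0 k else e1 (k - (d₀ + 1)), ?_, ?_, ?_, ?_, ?_⟩
  · simp [hs00]
  · have : ℓ₀ + ℓ₁ + 1 + 1 - (ℓ₀ + 1) = ℓ₁ + 1 := by omega
    simp only [if_neg (by omega : ¬ ℓ₀ + ℓ₁ + 1 + 1 ≤ ℓ₀), this, hs1t]
    omega
  · intro j hj
    rcases lt_trichotomy j ℓ₀ with h | h | h
    · simp only [if_pos (by omega : j ≤ ℓ₀), if_pos (by omega : j + 1 ≤ ℓ₀)]
      exact hs0m j (by omega)
    · subst h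
      simp only [if_pos le_rfl, if_neg (by omega : ¬ j + 1 ≤ j),
        Nat.add_sub_cancel_left, hs10]
      have := hs0m j le_rfl
      omega
    · simp only [if_neg (by omega : ¬ j ≤ ℓ₀), if_neg (by omega : ¬ j + 1 ≤ ℓ₀)]
      have h2 : j + 1 - (ℓ₀ + 1) = (j - (ℓ₀ + 1)) + 1 := by omega
      rw [h2]
      have := hs1m (j - (ℓ₀ + 1)) (by omega)
      omega
  · intro k
    by_cases h : k ≤ d₀ <;> simp [h, he0, he1]
  · have hub : ∀ j, j ≤ ℓ₀ + 1 → s0 j ≤ d₀ + 1 := by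
      intro j hj
      have := mono_aux s0 ℓ₀ hs0m j (ℓ₀ + 1) hj le_rfl
      omega
    refine Prod.ext ?_ ?_
    · show χ₀ _ = c.1
      rw [← hc0]
      congr 1
      funext j
      have hj : j.1 ≤ ℓ₀ := by omega
      have hstep : (if j.1 + 1 ≤ ℓ₀ then s0 (j.1 + 1)
          else d₀ + 1 + s1 (j.1 + 1 - (ℓ₀ + 1))) = s0 (j.1 + 1) := by
        by_cases h : j.1 + 1 ≤ ℓ₀
        · simp [h]
        · have hj' : j.1 = ℓ₀ := by omega
          simp [h, hj', hs10, hs0t]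
      simp only [if_pos hj, hstep]
      congr 1
      refine Finset.sum_congr rfl ?_
      intro k hk
      simp only [Finset.mem_Ioo] at hk
      have : k ≤ d₀ := by
        have := hub (j.1 + 1) (by omega)
        omega
      simp [this]
    · show χ₁ _ = c.2
      rw [← hc1]
      congr 1
      funext j
      have hj : j.1 ≤ ℓ₁ := by omega
      simp only [if_neg (by omega : ¬ ℓ₀ + 1 + j.1 ≤ ℓ₀),
        if_neg (by omega : ¬ ℓ₀ + 1 + j.1 + 1 ≤ ℓ₀)]
      have e1' : ℓ₀ + 1 + j.1 - (ℓ₀ + 1) = j.1 := by omega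
      have e2' : ℓ₀ + 1 + j.1 + 1 - (ℓ₀ + 1) = j.1 + 1 := by omega
      rw [e1', e2']
      congr 1
      · rw [← Finset.map_add_left_Ico _ _ (d₀ + 1), Finset.sum_map]
        rfl
      · rw [← Finset.map_add_left_Ioo _ _ (d₀ + 1), Finset.sum_map]
        refine Finset.sum_congr rfl ?_
        intro k hk
        simp only [addLeftEmbedding_apply]
        rw [if_neg (by omega : ¬ d₀ + 1 + k ≤ d₀)]
        congr 1
        omega
end
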